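/- arXiv:1611.04187 — 5 statements merged into one kernel-verified Lean document; each statement's English description precedes it below -/
import Mathlib

section
/- For every graph G, GA₁(G) ≤ √(n·M₁(G))/2, with equality if and only if G is regular. -/
open Finset Real

variable {V : Type*}

noncomputable def edgeSum (G : SimpleGraph V) [Fintype V] [DecidableRel G.Adj]
    (f : ℝ → ℝ → ℝ) (hf : ∀ a b, f a b = f b a) : ℝ :=
  ∑ e ∈ G.edgeFinset,
    Sym2.lift ⟨fun u v => f (G.degree u) (G.degree v), fun u v => hf _ _⟩ e

noncomputable def GA1 (G : SimpleGraph V) [Fintype V] [DecidableRel G.Adj] : ℝ :=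
  edgeSum G (fun x y => 2 * Real.sqrt (x * y) / (x + y))
    (fun a b => by rw [mul_comm a b, add_comm a b])

noncomputable def M1 (G : SimpleGraph V) [Fintype V] [DecidableRel G.Adj] : ℝ :=
  ∑ u : V, (G.degree u : ℝ) ^ 2

noncomputable def M2 (G : SimpleGraph V) [Fintype V] [DecidableRel G.Adj] : ℝ :=
  edgeSum G (fun x y => x * y) (fun a b => mul_comm a b)

noncomputable def randic (G : SimpleGraph V) [Fintype V] [DecidableRel G.Adj] : ℝ :=
  edgeSum G (fun x y => 1 / Real.sqrt (x * y)) (fun a b => by rw [mul_comm a b])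

noncomputable def genRandic (G : SimpleGraph V) [Fintype V] [DecidableRel G.Adj] (α : ℝ) : ℝ :=
  edgeSum G (fun x y => (x * y) ^ α) (fun a b => by rw [mul_comm a b])

noncomputable def modZagreb (G : SimpleGraph V) [Fintype V] [DecidableRel G.Adj] : ℝ :=
  edgeSum G (fun x y => 1 / (x * y)) (fun a b => by rw [mul_comm a b])

noncomputable def NKstar (G : SimpleGraph V) [Fintype V] [DecidableRel G.Adj] : ℝ :=
  ∏ e ∈ G.edgeFinset,
    Sym2.lift ⟨fun u v => ((G.degree u : ℝ) * (G.degree v : ℝ)), fun u v => mul_comm _ _⟩ e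

def GraphRegular (G : SimpleGraph V) [Fintype V] [DecidableRel G.Adj] : Prop :=
  ∃ k, G.IsRegularOfDegree k

lemma term_le_one {x y : ℝ} (hx : 0 < x) (hy : 0 < y) :
    2 * Real.sqrt (x * y) / (x + y) ≤ 1 := by
  rw [div_le_one (by linarith), Real.sqrt_mul hx.le]
  nlinarith [sq_nonneg (Real.sqrt x - Real.sqrt y), Real.sq_sqrt hx.le, Real.sq_sqrt hy.le]

lemma term_eq_one {x y : ℝ} (hx : 0 < x) (hy : 0 < y)
    (h : 2 * Real.sqrt (x * y) / (x + y) = 1) : x = y := by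
  rw [div_eq_one_iff_eq (by positivity), Real.sqrt_mul hx.le] at h
  have h1 := Real.sq_sqrt hx.le
  have h2 := Real.sq_sqrt hy.le
  have h3 : (Real.sqrt x - Real.sqrt y) ^ 2 = 0 := by nlinarith
  have h4 : Real.sqrt x = Real.sqrt y := by
    have := pow_eq_zero_iff (n := 2) (by norm_num) |>.mp h3
    linarith [this]
  nlinarith

theorem stmt2 (G : SimpleGraph V) [Fintype V] [DecidableRel G.Adj]
    (hc : G.Connected) (hm : G.edgeFinset.Nonempty) :
    GA1 G ≤ Real.sqrt ((Fintype.card V : ℝ) * M1 G) / 2 ∧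
      (GA1 G = Real.sqrt ((Fintype.card V : ℝ) * M1 G) / 2 ↔ GraphRegular G) := by
  classical
  have hdegpos : ∀ {u v : V}, G.Adj u v → (0 : ℝ) < G.degree u := by
    intro u v h
    exact_mod_cast G.degree_pos_iff_exists_adj u |>.mpr ⟨v, h⟩
  -- each edge term ≤ 1
  have hterm_le : ∀ e ∈ G.edgeFinset,
      Sym2.lift ⟨fun u v => 2 * Real.sqrt ((G.degree u : ℝ) * (G.degree v : ℝ)) /
        ((G.degree u : ℝ) + (G.degree v : ℝ)), fun u v => by
          dsimp only; rw [mul_comm (G.degree u : ℝ), add_comm (G.degree u : ℝ)]⟩ e ≤ 1 := by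
    intro e he
    induction e using Sym2.ind with
    | _ u v =>
      rw [SimpleGraph.mem_edgeFinset, SimpleGraph.mem_edgeSet] at he
      simpa using term_le_one (hdegpos he) (hdegpos he.symm)
  have hGA1eq : GA1 G = ∑ e ∈ G.edgeFinset,
      Sym2.lift ⟨fun u v => 2 * Real.sqrt ((G.degree u : ℝ) * (G.degree v : ℝ)) /
        ((G.degree u : ℝ) + (G.degree v : ℝ)), fun u v => by
          dsimp only; rw [mul_comm (G.degree u : ℝ), add_comm (G.degree u : ℝ)]⟩ e := rfl
  -- GA1 ≤ m
  have hGA1_le_m : GA1 G ≤ (G.edgeFinset.card : ℝ) := by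
    rw [hGA1eq]
    calc _ ≤ ∑ _e ∈ G.edgeFinset, (1 : ℝ) := Finset.sum_le_sum hterm_le
    _ = (G.edgeFinset.card : ℝ) := by simp
  -- degree sum formula
  have hds : (∑ v : V, (G.degree v : ℝ)) = 2 * (G.edgeFinset.card : ℝ) := by
    exact_mod_cast congrArg (Nat.cast : ℕ → ℝ) G.sum_degrees_eq_twice_card_edges
  -- m ≤ √(n M1)/2
  have hcauchy : (∑ v : V, (G.degree v : ℝ)) ^ 2 ≤
      (Fintype.card V : ℝ) * M1 G := by
    have := sq_sum_le_card_mul_sum_sq (s := (Finset.univ : Finset V))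
      (f := fun v => (G.degree v : ℝ))
    simpa [M1, Finset.card_univ] using this
  have hsum_nonneg : (0 : ℝ) ≤ ∑ v : V, (G.degree v : ℝ) := by positivity
  have hm_le : (G.edgeFinset.card : ℝ) ≤ Real.sqrt ((Fintype.card V : ℝ) * M1 G) / 2 := by
    have h1 : (∑ v : V, (G.degree v : ℝ)) ≤ Real.sqrt ((Fintype.card V : ℝ) * M1 G) := by
      rw [← Real.sqrt_sq hsum_nonneg]
      exact Real.sqrt_le_sqrt hcauchy
    linarith [hds ▸ h1]
  have hle : GA1 G ≤ Real.sqrt ((Fintype.card V : ℝ) * M1 G) / 2 := hGA1_le_m.trans hm_le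
  refine ⟨hle, ?_, ?_⟩
  · -- equality → regular
    intro heq
    have hGA1m : GA1 G = (G.edgeFinset.card : ℝ) :=
      le_antisymm hGA1_le_m (by rw [heq]; exact hm_le)
    have hall1 : ∀ e ∈ G.edgeFinset,
        Sym2.lift ⟨fun u v => 2 * Real.sqrt ((G.degree u : ℝ) * (G.degree v : ℝ)) /
          ((G.degree u : ℝ) + (G.degree v : ℝ)), fun u v => by
            dsimp only; rw [mul_comm (G.degree u : ℝ), add_comm (G.degree u : ℝ)]⟩ e
          = 1 := by
      apply (Finset.sum_eq_sum_iff_of_le hterm_le).mp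
      rw [← hGA1eq, hGA1m]; simp
    have hadj : ∀ u v : V, G.Adj u v → G.degree u = G.degree v := by
      intro u v h
      have he : s(u, v) ∈ G.edgeFinset := by
        rw [SimpleGraph.mem_edgeFinset, SimpleGraph.mem_edgeSet]; exact h
      have := hall1 _ he
      simp only [Sym2.lift_mk] at this
      exact_mod_cast term_eq_one (hdegpos h) (hdegpos h.symm) this
    obtain ⟨u0⟩ := hc.nonempty
    refine ⟨G.degree u0, fun v => ?_⟩
    obtain ⟨w⟩ := (hc v u0 : G.Reachable v u0)
    induction w with
    | nil => rfl
    | cons h p ih => exact (hadj _ _ h).trans ih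
  · -- regular → equality
    rintro ⟨k, hk⟩
    obtain ⟨e, he⟩ := hm
    have hkpos : 0 < k := by
      induction e using Sym2.ind with
      | _ u v =>
        rw [SimpleGraph.mem_edgeFinset, SimpleGraph.mem_edgeSet] at he
        have := G.degree_pos_iff_exists_adj u |>.mpr ⟨v, he⟩
        rwa [hk u] at this
    have hkr : (0 : ℝ) < (k : ℝ) := by exact_mod_cast hkpos
    have hGA1m : GA1 G = (G.edgeFinset.card : ℝ) := by
      rw [hGA1eq]
      rw [Finset.sum_congr rfl (g := fun _ => (1 : ℝ)) ?_]
      · simp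
      · intro e' he'
        induction e' using Sym2.ind with
        | _ u v =>
          simp only [Sym2.lift_mk, hk u, hk v]
          rw [Real.sqrt_mul_self hkr.le]
          field_simp; ring
    have hM1 : M1 G = (Fintype.card V : ℝ) * (k : ℝ) ^ 2 := by
      simp [M1, hk _, Finset.card_univ]
    have hdsk : 2 * (G.edgeFinset.card : ℝ) = (Fintype.card V : ℝ) * (k : ℝ) := by
      rw [← hds]; simp [hk _, Finset.card_univ, mul_comm]
    rw [hGA1m, hM1]
    have h2 : (Fintype.card V : ℝ) * ((Fintype.card V : ℝ) * (k : ℝ) ^ 2)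
        = ((Fintype.card V : ℝ) * (k : ℝ)) ^ 2 := by ring
    rw [h2, Real.sqrt_sq (by positivity), ← hdsk]
    ring
end

section
/- For every graph G with m edges, GA₁(G)² ≤ (M₂(G) + δ²·m(m−1))/δ², with equality if and only if G is regular. -/
open Finset Real

variable {V : Type*}

lemma ga_aux (δ a b : ℝ) (hδ1 : 1 ≤ δ) (ha : δ ≤ a) (hb : δ ≤ b) :
    (0 ≤ 2 * Real.sqrt (a * b) / (a + b) ∧ 2 * Real.sqrt (a * b) / (a + b) ≤ 1) ∧
    (2 * Real.sqrt (a * b) / (a + b)) ^ 2 ≤ a * b / δ ^ 2 ∧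
    ((2 * Real.sqrt (a * b) / (a + b)) ^ 2 = a * b / δ ^ 2 → a = δ ∧ b = δ) := by
  have ha0 : 0 < a := by linarith
  have hb0 : 0 < b := by linarith
  have hab0 : 0 < a * b := mul_pos ha0 hb0
  have habpos : 0 < a + b := by linarith
  have hsq : Real.sqrt (a * b) ^ 2 = a * b := Real.sq_sqrt (le_of_lt hab0)
  have hsnn : 0 ≤ Real.sqrt (a * b) := Real.sqrt_nonneg _
  have hg2 : (2 * Real.sqrt (a * b) / (a + b)) ^ 2 = 4 * (a * b) / (a + b) ^ 2 := by
    rw [div_pow, mul_pow, hsq]; norm_num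
  have hsum2 : 4 * δ ^ 2 ≤ (a + b) ^ 2 := by nlinarith
  refine ⟨⟨by positivity, ?_⟩, ?_, ?_⟩
  · rw [div_le_one habpos]
    nlinarith [sq_nonneg (a - b)]
  · rw [hg2, div_le_div_iff₀ (by positivity) (by positivity)]
    nlinarith
  · intro heq
    rw [hg2, div_eq_div_iff (by positivity) (by positivity)] at heq
    have h2 : a * b * (4 * δ ^ 2) = a * b * ((a + b) ^ 2) := by linear_combination heq
    have hs : 4 * δ ^ 2 = (a + b) ^ 2 := mul_left_cancel₀ (ne_of_gt hab0) h2
    have h4 : (a + b - 2 * δ) * (a + b + 2 * δ) = 0 := by linear_combination -hs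
    have hsum : a + b = 2 * δ := by
      rcases mul_eq_zero.mp h4 with h | h
      · linarith
      · linarith
    exact ⟨by linarith, by linarith⟩

theorem stmt8 (G : SimpleGraph V) [Fintype V] [DecidableRel G.Adj]
    (hc : G.Connected) (hm : G.edgeFinset.Nonempty) :
    (GA1 G) ^ 2 ≤
      (M2 G + (G.minDegree : ℝ) ^ 2 *
        ((G.edgeFinset.card : ℝ) * ((G.edgeFinset.card : ℝ) - 1))) / (G.minDegree : ℝ) ^ 2 ∧
    ((GA1 G) ^ 2 =
      (M2 G + (G.minDegree : ℝ) ^ 2 *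
        ((G.edgeFinset.card : ℝ) * ((G.edgeFinset.card : ℝ) - 1))) / (G.minDegree : ℝ) ^ 2 ↔
      GraphRegular G) := by
  classical
  have hne : Nonempty V := hc.nonempty
  have hadj : ∀ v : V, ∃ w, G.Adj v w := by
    obtain ⟨e0, he0⟩ := hm
    induction e0 using Sym2.ind with
    | _ u w =>
      rw [SimpleGraph.mem_edgeFinset, SimpleGraph.mem_edgeSet] at he0
      intro v
      by_cases hv : v = u
      · exact ⟨w, hv ▸ he0⟩
      · obtain ⟨pw⟩ := hc.preconnected v u
        cases pw with
        | nil => exact absurd rfl hv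
        | cons h _ => exact ⟨_, h⟩
  set δ : ℝ := (G.minDegree : ℝ) with hδ_def
  set m : ℝ := (G.edgeFinset.card : ℝ) with hm_def
  have hδ1 : (1:ℝ) ≤ δ := by
    obtain ⟨v, hv⟩ := G.exists_minimal_degree_vertex
    rw [hδ_def, hv]
    exact_mod_cast (G.degree_pos_iff_exists_adj v).mpr (hadj v)
  have hδ0 : δ ≠ 0 := by linarith
  set g : Sym2 V → ℝ := fun e => Sym2.lift ⟨fun u v =>
      2 * Real.sqrt ((G.degree u : ℝ) * (G.degree v : ℝ)) /
        ((G.degree u : ℝ) + (G.degree v : ℝ)),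
      fun u v => by dsimp only; rw [mul_comm ((G.degree u : ℝ)), add_comm ((G.degree u : ℝ))]⟩ e
    with hg_def
  set p : Sym2 V → ℝ := fun e => Sym2.lift ⟨fun u v =>
      (G.degree u : ℝ) * (G.degree v : ℝ), fun u v => mul_comm _ _⟩ e with hp_def
  have hGA : GA1 G = ∑ e ∈ G.edgeFinset, g e := rfl
  have hM2 : M2 G = ∑ e ∈ G.edgeFinset, p e := rfl
  set S : ℝ := ∑ e ∈ G.edgeFinset, g e with hS_def
  have key : ∀ e ∈ G.edgeFinset, (0 ≤ g e ∧ g e ≤ 1) ∧ (g e) ^ 2 ≤ p e / δ ^ 2 ∧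
      ((g e) ^ 2 = p e / δ ^ 2 → ∀ v ∈ e, (G.degree v : ℝ) = δ) := by
    intro e he
    induction e using Sym2.ind with
    | _ u v =>
      have ha : δ ≤ (G.degree u : ℝ) := by
        rw [hδ_def]; exact_mod_cast G.minDegree_le_degree u
      have hb : δ ≤ (G.degree v : ℝ) := by
        rw [hδ_def]; exact_mod_cast G.minDegree_le_degree v
      obtain ⟨h1, h2, h3⟩ := ga_aux δ (G.degree u : ℝ) (G.degree v : ℝ) hδ1 ha hb
      have hguv : g s(u, v) = 2 * Real.sqrt ((G.degree u : ℝ) * (G.degree v : ℝ)) /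
          ((G.degree u : ℝ) + (G.degree v : ℝ)) := rfl
      have hpuv : p s(u, v) = (G.degree u : ℝ) * (G.degree v : ℝ) := rfl
      rw [hguv, hpuv]
      refine ⟨h1, h2, fun heq w hw => ?_⟩
      obtain ⟨haδ, hbδ⟩ := h3 heq
      rw [Sym2.mem_iff] at hw
      rcases hw with rfl | rfl
      · exact haδ
      · exact hbδ
  have hm1 : 1 ≤ G.edgeFinset.card := Finset.card_pos.mpr hm
  have hterm : ∀ e ∈ G.edgeFinset, g e * (S - g e) ≤ 1 * (m - 1) := by
    intro e he
    have h1 : S - g e = ∑ x ∈ G.edgeFinset.erase e, g x := by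
      rw [hS_def, ← Finset.sum_erase_add G.edgeFinset g he]; ring
    have h2 : ∑ x ∈ G.edgeFinset.erase e, g x ≤ ((G.edgeFinset.erase e).card : ℝ) * 1 := by
      have := Finset.sum_le_card_nsmul (G.edgeFinset.erase e) g 1
        (fun x hx => ((key x (Finset.mem_of_mem_erase hx)).1.2))
      rwa [nsmul_eq_mul] at this
    have h3 : ((G.edgeFinset.erase e).card : ℝ) = m - 1 := by
      rw [Finset.card_erase_of_mem he, hm_def, Nat.cast_sub hm1, Nat.cast_one]
    have h4 : 0 ≤ S - g e := by
      rw [h1]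
      exact Finset.sum_nonneg fun x hx => ((key x (Finset.mem_of_mem_erase hx)).1.1)
    have h5 : S - g e ≤ m - 1 := by rw [h1]; rw [h3] at h2; linarith
    exact mul_le_mul ((key e he).1.2) h5 h4 zero_le_one
  have hS2 : S ^ 2 ≤ (∑ e ∈ G.edgeFinset, (g e) ^ 2) + m * (m - 1) := by
    have hsplit : ∑ e ∈ G.edgeFinset, g e * (S - g e)
        = S ^ 2 - ∑ e ∈ G.edgeFinset, (g e) ^ 2 := by
      simp_rw [mul_sub, Finset.sum_sub_distrib, ← Finset.sum_mul, ← pow_two]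
      rw [← hS_def]; ring
    have hsum := Finset.sum_le_sum hterm
    rw [hsplit, Finset.sum_const, nsmul_eq_mul, ← hm_def] at hsum
    nlinarith [hsum]
  have hsum_le : (∑ e ∈ G.edgeFinset, (g e) ^ 2) ≤ (∑ e ∈ G.edgeFinset, p e) / δ ^ 2 := by
    rw [Finset.sum_div]
    exact Finset.sum_le_sum fun e he => (key e he).2.1
  have hRHS : (M2 G + δ ^ 2 * (m * (m - 1))) / δ ^ 2
      = (∑ e ∈ G.edgeFinset, p e) / δ ^ 2 + m * (m - 1) := by
    rw [hM2, add_div]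
    congr 1
    field_simp
  constructor
  · rw [hGA, hRHS]
    linarith
  constructor
  · intro hEq
    rw [hGA, hRHS] at hEq
    have heq2 : (∑ e ∈ G.edgeFinset, (g e) ^ 2) = (∑ e ∈ G.edgeFinset, p e) / δ ^ 2 := by
      linarith
    rw [Finset.sum_div] at heq2
    have heach := (Finset.sum_eq_sum_iff_of_le (fun e he => (key e he).2.1)).mp heq2
    refine ⟨G.minDegree, fun v => ?_⟩
    obtain ⟨w, hw⟩ := hadj v
    have hemem : s(v, w) ∈ G.edgeFinset := by
      rw [SimpleGraph.mem_edgeFinset, SimpleGraph.mem_edgeSet]; exact hw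
    have := (key _ hemem).2.2 (heach _ hemem) v (Sym2.mem_mk_left v w)
    rw [hδ_def] at this
    exact_mod_cast this
  · rintro ⟨k, hk⟩
    have hδk : δ = (k : ℝ) := by
      obtain ⟨v, hv⟩ := G.exists_minimal_degree_vertex
      rw [hδ_def, hv, hk v]
    have hk0 : (0:ℝ) < (k : ℝ) := by rw [← hδk]; linarith
    have hg1 : ∀ e ∈ G.edgeFinset, g e = 1 := by
      intro e _
      induction e using Sym2.ind with
      | _ u v =>
        have h : g s(u, v) = 2 * Real.sqrt ((G.degree u : ℝ) * (G.degree v : ℝ)) /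
            ((G.degree u : ℝ) + (G.degree v : ℝ)) := rfl
        rw [h, hk u, hk v, Real.sqrt_mul_self (le_of_lt hk0)]
        field_simp
        ring
    have hp1 : ∀ e ∈ G.edgeFinset, p e = δ ^ 2 := by
      intro e _
      induction e using Sym2.ind with
      | _ u v =>
        have h : p s(u, v) = (G.degree u : ℝ) * (G.degree v : ℝ) := rfl
        rw [h, hk u, hk v, hδk]; ring
    have hSm : S = m := by
      rw [hS_def, Finset.sum_congr rfl hg1, Finset.sum_const, nsmul_eq_mul, mul_one, hm_def]
    have hM2v : M2 G = m * δ ^ 2 := by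
      rw [hM2, Finset.sum_congr rfl hp1, Finset.sum_const, nsmul_eq_mul, hm_def]
    rw [hGA, hSm, hM2v]
    field_simp
    ring
end

section
/- For any graph G and real α ≤ −1/2 with α ≠ 0, δ^(−2α)·R_α(G) ≤ GA₁(G) ≤ Δ^(−2α)·R_α(G), with each equality if and only if G is regular. -/
open Finset Real

variable {V : Type*}

/- ### Auxiliary lemmas -/

lemma step1_lower' (α d x y : ℝ) (hα : α ≤ -(1/2)) (hd : 0 < d) (hsq : d * d ≤ x * y) :
    d ^ (-(2*α)) * (x*y)^α ≤ d / Real.sqrt (x*y) := by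
  have hxy : 0 < x * y := lt_of_lt_of_le (mul_pos hd hd) hsq
  have h1 : (x*y)^α = (x*y)^(α + 1/2) * (x*y)^(-(1/2) : ℝ) := by
    rw [← Real.rpow_add hxy]; ring_nf
  have h2 : (x*y)^(-(1/2) : ℝ) = 1 / Real.sqrt (x*y) := by
    rw [Real.rpow_neg hxy.le, Real.sqrt_eq_rpow, one_div]
    norm_num
  have h3 : (x*y)^(α + 1/2) ≤ (d*d)^(α + 1/2) :=
    Real.rpow_le_rpow_of_nonpos (mul_pos hd hd) hsq (by linarith)
  have h4 : d ^ (-(2*α)) * (d*d)^(α + 1/2) = d := by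
    rw [Real.mul_rpow hd.le hd.le, ← Real.rpow_add hd, ← Real.rpow_add hd]
    rw [show -(2*α) + (α + 1/2 + (α + 1/2)) = 1 by ring, Real.rpow_one]
  have hs : 0 < Real.sqrt (x*y) := Real.sqrt_pos.2 hxy
  calc d ^ (-(2*α)) * (x*y)^α = d ^ (-(2*α)) * (x*y)^(α + 1/2) * (1 / Real.sqrt (x*y)) := by
        rw [h1, h2]; ring
    _ ≤ d ^ (-(2*α)) * (d*d)^(α + 1/2) * (1 / Real.sqrt (x*y)) := by
        apply mul_le_mul_of_nonneg_right _ (by positivity)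
        exact mul_le_mul_of_nonneg_left h3 (Real.rpow_nonneg hd.le _)
    _ = d / Real.sqrt (x*y) := by rw [h4]; ring

lemma step2_lower' (d x y : ℝ) (hd : 0 < d) (hx : d ≤ x) (hy : d ≤ y) :
    d / Real.sqrt (x*y) ≤ 2 * Real.sqrt (x*y) / (x + y) := by
  have hx0 : 0 < x := hd.trans_le hx
  have hy0 : 0 < y := hd.trans_le hy
  have hs : 0 < Real.sqrt (x*y) := Real.sqrt_pos.2 (mul_pos hx0 hy0)
  rw [div_le_div_iff₀ hs (by positivity)]
  have h : 2 * Real.sqrt (x*y) * Real.sqrt (x*y) = 2 * (x*y) := by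
    rw [mul_assoc, Real.mul_self_sqrt (by positivity)]
  rw [h]
  nlinarith [mul_le_mul_of_nonneg_right hx hy0.le, mul_le_mul_of_nonneg_right hy hx0.le]

lemma step2_lower_strict' (d x y : ℝ) (hd : 0 < d) (hx : d ≤ x) (hy : d ≤ y)
    (h : d < x ∨ d < y) :
    d / Real.sqrt (x*y) < 2 * Real.sqrt (x*y) / (x + y) := by
  have hx0 : 0 < x := hd.trans_le hx
  have hy0 : 0 < y := hd.trans_le hy
  have hs : 0 < Real.sqrt (x*y) := Real.sqrt_pos.2 (mul_pos hx0 hy0)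
  rw [div_lt_div_iff₀ hs (by positivity)]
  have h2 : 2 * Real.sqrt (x*y) * Real.sqrt (x*y) = 2 * (x*y) := by
    rw [mul_assoc, Real.mul_self_sqrt (by positivity)]
  rw [h2]
  rcases h with h | h
  · nlinarith [mul_le_mul_of_nonneg_right hy hx0.le, mul_lt_mul_of_pos_right h hy0]
  · nlinarith [mul_le_mul_of_nonneg_right hx hy0.le, mul_lt_mul_of_pos_right h hx0]

lemma step1_upper' (α D x y : ℝ) (hα : α ≤ -(1/2)) (hD : 0 < D)
    (hx0 : 0 < x) (hy0 : 0 < y) (hsq : x * y ≤ D * D) :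
    D / Real.sqrt (x*y) ≤ D ^ (-(2*α)) * (x*y)^α := by
  have hxy : 0 < x * y := mul_pos hx0 hy0
  have h1 : (x*y)^α = (x*y)^(α + 1/2) * (x*y)^(-(1/2) : ℝ) := by
    rw [← Real.rpow_add hxy]; ring_nf
  have h2 : (x*y)^(-(1/2) : ℝ) = 1 / Real.sqrt (x*y) := by
    rw [Real.rpow_neg hxy.le, Real.sqrt_eq_rpow, one_div]
    norm_num
  have h3 : (D*D)^(α + 1/2) ≤ (x*y)^(α + 1/2) :=
    Real.rpow_le_rpow_of_nonpos hxy hsq (by linarith)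
  have h4 : D ^ (-(2*α)) * (D*D)^(α + 1/2) = D := by
    rw [Real.mul_rpow hD.le hD.le, ← Real.rpow_add hD, ← Real.rpow_add hD]
    rw [show -(2*α) + (α + 1/2 + (α + 1/2)) = 1 by ring, Real.rpow_one]
  have hs : 0 < Real.sqrt (x*y) := Real.sqrt_pos.2 hxy
  calc D / Real.sqrt (x*y) = D ^ (-(2*α)) * (D*D)^(α + 1/2) * (1 / Real.sqrt (x*y)) := by
        rw [h4]; ring
    _ ≤ D ^ (-(2*α)) * (x*y)^(α + 1/2) * (1 / Real.sqrt (x*y)) := by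
        apply mul_le_mul_of_nonneg_right _ (by positivity)
        exact mul_le_mul_of_nonneg_left h3 (Real.rpow_nonneg hD.le _)
    _ = D ^ (-(2*α)) * (x*y)^α := by rw [h1, h2]; ring

lemma step2_upper' (D x y : ℝ) (hx0 : 0 < x) (hy0 : 0 < y) (hx : x ≤ D) (hy : y ≤ D) :
    2 * Real.sqrt (x*y) / (x + y) ≤ D / Real.sqrt (x*y) := by
  have hs : 0 < Real.sqrt (x*y) := Real.sqrt_pos.2 (mul_pos hx0 hy0)
  rw [div_le_div_iff₀ (by positivity) hs]
  have h : 2 * Real.sqrt (x*y) * Real.sqrt (x*y) = 2 * (x*y) := by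
    rw [mul_assoc, Real.mul_self_sqrt (by positivity)]
  rw [mul_comm (2 * Real.sqrt (x*y)) (Real.sqrt (x*y)), mul_comm (Real.sqrt (x*y)) (2 * Real.sqrt (x*y))] at *
  rw [h]
  nlinarith [mul_le_mul_of_nonneg_right hx hy0.le, mul_le_mul_of_nonneg_right hy hx0.le]

lemma step2_upper_strict' (D x y : ℝ) (hx0 : 0 < x) (hy0 : 0 < y) (hx : x ≤ D) (hy : y ≤ D)
    (h : x < D ∨ y < D) :
    2 * Real.sqrt (x*y) / (x + y) < D / Real.sqrt (x*y) := by
  have hs : 0 < Real.sqrt (x*y) := Real.sqrt_pos.2 (mul_pos hx0 hy0)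
  rw [div_lt_div_iff₀ (by positivity) hs]
  have h2 : 2 * Real.sqrt (x*y) * Real.sqrt (x*y) = 2 * (x*y) := by
    rw [mul_assoc, Real.mul_self_sqrt (by positivity)]
  rw [h2]
  rcases h with h | h
  · nlinarith [mul_le_mul_of_nonneg_right hy hx0.le, mul_lt_mul_of_pos_right h hy0]
  · nlinarith [mul_le_mul_of_nonneg_right hx hy0.le, mul_lt_mul_of_pos_right h hx0]

lemma regular_term' (α k : ℝ) (hk : 0 < k) :
    2 * Real.sqrt (k*k) / (k + k) = k ^ (-(2*α)) * (k*k)^α := by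
  have h1 : Real.sqrt (k*k) = k := Real.sqrt_mul_self hk.le
  have h2 : k ^ (-(2*α)) * (k*k)^α = 1 := by
    rw [Real.mul_rpow hk.le hk.le, ← Real.rpow_add hk, ← Real.rpow_add hk,
      show -(2*α) + (α + α) = 0 by ring, Real.rpow_zero]
  rw [h1, h2]
  field_simp
  ring

lemma all_deg_pos (G : SimpleGraph V) [Fintype V] [DecidableRel G.Adj]
    (hc : G.Connected) (hm : G.edgeFinset.Nonempty) : ∀ v, 0 < G.degree v := by
  obtain ⟨e, he⟩ := hm
  induction e using Sym2.ind with
  | _ a b =>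
    have hab : G.Adj a b := G.mem_edgeSet.mp (SimpleGraph.mem_edgeFinset.mp he)
    intro v
    rw [SimpleGraph.degree_pos_iff_exists_adj]
    obtain ⟨z, hz⟩ : ∃ z, z ≠ v := by
      by_cases h : a = v
      · subst h; exact ⟨b, hab.ne'⟩
      · exact ⟨a, h⟩
    obtain ⟨p⟩ := hc.preconnected v z
    cases p with
    | nil => exact absurd rfl hz
    | cons h q => exact ⟨_, h⟩

theorem stmt11 (G : SimpleGraph V) [Fintype V] [DecidableRel G.Adj]
    (hc : G.Connected) (hm : G.edgeFinset.Nonempty) (α : ℝ) (hα : α ≤ -(1/2)) (hα0 : α ≠ 0) :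
    (G.minDegree : ℝ) ^ (-(2 * α)) * genRandic G α ≤ GA1 G ∧
    GA1 G ≤ (G.maxDegree : ℝ) ^ (-(2 * α)) * genRandic G α ∧
    (GA1 G = (G.minDegree : ℝ) ^ (-(2 * α)) * genRandic G α ↔ GraphRegular G) ∧
    (GA1 G = (G.maxDegree : ℝ) ^ (-(2 * α)) * genRandic G α ↔ GraphRegular G) := by
  classical
  have hdeg : ∀ v, 0 < G.degree v := all_deg_pos G hc hm
  have hne : Nonempty V := ⟨hm.choose.out.1⟩
  obtain ⟨vm, hvm⟩ := G.exists_minimal_degree_vertex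
  have hminpos : 0 < G.minDegree := hvm ▸ hdeg vm
  have hmaxpos : 0 < G.maxDegree := lt_of_lt_of_le (hdeg vm) (G.degree_le_maxDegree vm)
  set d : ℝ := (G.minDegree : ℝ) with hd_def
  set D : ℝ := (G.maxDegree : ℝ) with hD_def
  have hd : 0 < d := by rw [hd_def]; exact_mod_cast hminpos
  have hD : 0 < D := by rw [hD_def]; exact_mod_cast hmaxpos
  have hmin : ∀ v, d ≤ (G.degree v : ℝ) := fun v => by
    rw [hd_def]; exact_mod_cast G.minDegree_le_degree v
  have hmax : ∀ v, (G.degree v : ℝ) ≤ D := fun v => by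
    rw [hD_def]; exact_mod_cast G.degree_le_maxDegree v
  have hdegR : ∀ v, (0:ℝ) < (G.degree v : ℝ) := fun v => by exact_mod_cast hdeg v
  -- pointwise bounds
  have hptL : ∀ e ∈ G.edgeFinset,
      d ^ (-(2*α)) * Sym2.lift ⟨fun u w => ((G.degree u : ℝ) * (G.degree w : ℝ)) ^ α,
        fun u w => by dsimp only; rw [mul_comm ((G.degree u : ℝ))]⟩ e
      ≤ Sym2.lift ⟨fun u w => 2 * Real.sqrt ((G.degree u : ℝ) * (G.degree w : ℝ)) /
          ((G.degree u : ℝ) + (G.degree w : ℝ)),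
        fun u w => by dsimp only; rw [mul_comm ((G.degree u : ℝ)), add_comm ((G.degree u : ℝ))]⟩ e := by
    intro e _
    induction e using Sym2.ind with
    | _ u w =>
      simp only [Sym2.lift_mk]
      exact (step1_lower' α d _ _ hα hd
          (mul_le_mul (hmin u) (hmin w) hd.le (hdegR u).le)).trans
        (step2_lower' d _ _ hd (hmin u) (hmin w))
  have hptU : ∀ e ∈ G.edgeFinset,
      Sym2.lift ⟨fun u w => 2 * Real.sqrt ((G.degree u : ℝ) * (G.degree w : ℝ)) /
          ((G.degree u : ℝ) + (G.degree w : ℝ)),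
        fun u w => by dsimp only; rw [mul_comm ((G.degree u : ℝ)), add_comm ((G.degree u : ℝ))]⟩ e
      ≤ D ^ (-(2*α)) * Sym2.lift ⟨fun u w => ((G.degree u : ℝ) * (G.degree w : ℝ)) ^ α,
        fun u w => by dsimp only; rw [mul_comm ((G.degree u : ℝ))]⟩ e := by
    intro e _
    induction e using Sym2.ind with
    | _ u w =>
      simp only [Sym2.lift_mk]
      exact (step2_upper' D _ _ (hdegR u) (hdegR w) (hmax u) (hmax w)).trans
        (step1_upper' α D _ _ hα hD (hdegR u) (hdegR w)
          (mul_le_mul (hmax u) (hmax w) (hdegR w).le hD.le))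
  -- sum forms
  have hGAsum : GA1 G = ∑ e ∈ G.edgeFinset,
      Sym2.lift ⟨fun u w => 2 * Real.sqrt ((G.degree u : ℝ) * (G.degree w : ℝ)) /
          ((G.degree u : ℝ) + (G.degree w : ℝ)),
        fun u w => by dsimp only; rw [mul_comm ((G.degree u : ℝ)), add_comm ((G.degree u : ℝ))]⟩ e := rfl
  have hRsumL : d ^ (-(2*α)) * genRandic G α = ∑ e ∈ G.edgeFinset,
      d ^ (-(2*α)) * Sym2.lift ⟨fun u w => ((G.degree u : ℝ) * (G.degree w : ℝ)) ^ α,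
        fun u w => by dsimp only; rw [mul_comm ((G.degree u : ℝ))]⟩ e := by
    rw [← Finset.mul_sum]; rfl
  have hRsumU : D ^ (-(2*α)) * genRandic G α = ∑ e ∈ G.edgeFinset,
      D ^ (-(2*α)) * Sym2.lift ⟨fun u w => ((G.degree u : ℝ) * (G.degree w : ℝ)) ^ α,
        fun u w => by dsimp only; rw [mul_comm ((G.degree u : ℝ))]⟩ e := by
    rw [← Finset.mul_sum]; rfl
  have hle_low : d ^ (-(2*α)) * genRandic G α ≤ GA1 G := by
    rw [hRsumL, hGAsum]; exact Finset.sum_le_sum hptL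
  have hle_up : GA1 G ≤ D ^ (-(2*α)) * genRandic G α := by
    rw [hRsumU, hGAsum]; exact Finset.sum_le_sum hptU
  -- regular → equalities
  have hreg_eq : ∀ k : ℕ, G.IsRegularOfDegree k →
      (GA1 G = d ^ (-(2*α)) * genRandic G α ∧ GA1 G = D ^ (-(2*α)) * genRandic G α) := by
    intro k hk
    have hdk : G.minDegree = k := le_antisymm (hk vm ▸ G.minDegree_le_degree vm)
      (G.le_minDegree_of_forall_le_degree k (fun v => (hk v).ge))
    have hDk : G.maxDegree = k := le_antisymm
      (G.maxDegree_le_of_forall_degree_le k (fun v => (hk v).le))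
      (hk vm ▸ G.degree_le_maxDegree vm)
    have hdD : d = D := by rw [hd_def, hD_def, hdk, hDk]
    have hkey : GA1 G = d ^ (-(2*α)) * genRandic G α := by
      rw [hRsumL, hGAsum]
      apply Finset.sum_congr rfl
      intro e _
      induction e using Sym2.ind with
      | _ u w =>
        simp only [Sym2.lift_mk]
        have hu : (G.degree u : ℝ) = d := by rw [hk u, hd_def, hdk]
        have hw : (G.degree w : ℝ) = d := by rw [hk w, hd_def, hdk]
        rw [hu, hw]
        exact regular_term' α d hd
    exact ⟨hkey, by rw [← hdD]; exact hkey⟩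
  refine ⟨hle_low, hle_up, ⟨?_, fun ⟨k, hk⟩ => (hreg_eq k hk).1⟩,
    ⟨?_, fun ⟨k, hk⟩ => (hreg_eq k hk).2⟩⟩
  · -- GA1 = min-bound → regular
    intro h
    rw [hRsumL, hGAsum] at h
    have hall := (Finset.sum_eq_sum_iff_of_le hptL).mp h.symm
    refine ⟨G.minDegree, fun v => ?_⟩
    by_contra hv
    obtain ⟨w, hw⟩ := (G.degree_pos_iff_exists_adj v).mp (hdeg v)
    have hedge : s(v, w) ∈ G.edgeFinset := by
      rw [SimpleGraph.mem_edgeFinset]; exact hw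
    have heq := hall _ hedge
    simp only [Sym2.lift_mk] at heq
    have hdlt : d < (G.degree v : ℝ) := by
      rw [hd_def]; exact_mod_cast lt_of_le_of_ne (G.minDegree_le_degree v) (Ne.symm hv)
    have hstrict := (step1_lower' α d _ _ hα hd
        (mul_le_mul (hmin v) (hmin w) hd.le (hdegR v).le)).trans_lt
      (step2_lower_strict' d _ _ hd (hmin v) (hmin w) (Or.inl hdlt))
    exact absurd heq (ne_of_lt hstrict)
  · -- GA1 = max-bound → regular
    intro h
    rw [hRsumU, hGAsum] at h
    have hall := (Finset.sum_eq_sum_iff_of_le hptU).mp h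
    refine ⟨G.maxDegree, fun v => ?_⟩
    by_contra hv
    obtain ⟨w, hw⟩ := (G.degree_pos_iff_exists_adj v).mp (hdeg v)
    have hedge : s(v, w) ∈ G.edgeFinset := by
      rw [SimpleGraph.mem_edgeFinset]; exact hw
    have heq := hall _ hedge
    simp only [Sym2.lift_mk] at heq
    have hdlt : (G.degree v : ℝ) < D := by
      rw [hD_def]; exact_mod_cast lt_of_le_of_ne (G.degree_le_maxDegree v) hv
    have hstrict := (step2_upper_strict' D _ _ (hdegR v) (hdegR w) (hmax v) (hmax w)
        (Or.inl hdlt)).trans_le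
      (step1_upper' α D _ _ hα hD (hdegR v) (hdegR w)
        (mul_le_mul (hmax v) (hmax w) (hdegR w).le hD.le))
    exact absurd heq (ne_of_lt hstrict)
end

section
/- For any graph G and real α ≥ −1/2 with α ≠ 0, δ·Δ^(−2α−1)·R_α(G) ≤ GA₁(G) ≤ Δ·δ^(−2α−1)·R_α(G), with each equality if and only if G is regular. -/
open Finset Real

variable {V : Type*}

/- ### Auxiliary real lemmas -/

lemma step_low {d x y : ℝ} (hd : 0 < d) (hdx : d ≤ x) (hdy : d ≤ y) :
    d / Real.sqrt (x * y) ≤ 2 * Real.sqrt (x * y) / (x + y) := by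
  have hx : 0 < x := hd.trans_le hdx
  have hy : 0 < y := hd.trans_le hdy
  have hs : 0 < Real.sqrt (x * y) := Real.sqrt_pos.2 (by positivity)
  have hsq : Real.sqrt (x * y) * Real.sqrt (x * y) = x * y :=
    Real.mul_self_sqrt (by positivity)
  rw [div_le_div_iff₀ hs (by positivity)]
  nlinarith [mul_le_mul_of_nonneg_right hdx hy.le, mul_le_mul_of_nonneg_right hdy hx.le]

lemma step_low_eq {d x y : ℝ} (hd : 0 < d) (hdx : d ≤ x) (hdy : d ≤ y)
    (h : d / Real.sqrt (x * y) = 2 * Real.sqrt (x * y) / (x + y)) : x = d ∧ y = d := by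
  have hx : 0 < x := hd.trans_le hdx
  have hy : 0 < y := hd.trans_le hdy
  have hs : 0 < Real.sqrt (x * y) := Real.sqrt_pos.2 (by positivity)
  have hsq : Real.sqrt (x * y) * Real.sqrt (x * y) = x * y :=
    Real.mul_self_sqrt (by positivity)
  rw [div_eq_div_iff hs.ne' (by positivity : (0:ℝ) < x + y).ne'] at h
  have h' : d * (x + y) = 2 * (x * y) := by nlinarith
  have h1 : d * x ≤ x * y := by nlinarith [mul_le_mul_of_nonneg_right hdy hx.le]
  have h2 : d * y ≤ x * y := by nlinarith [mul_le_mul_of_nonneg_right hdx hy.le]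
  have e1 : d * y = x * y := by nlinarith
  have e2 : d * x = x * y := by nlinarith
  constructor
  · exact (mul_right_cancel₀ hy.ne' (by linarith : d * y = x * y)).symm
  · have : d * x = y * x := by linarith
    exact (mul_right_cancel₀ hx.ne' this).symm

lemma step_high {D x y : ℝ} (hx : 0 < x) (hy : 0 < y) (hxD : x ≤ D) (hyD : y ≤ D) :
    2 * Real.sqrt (x * y) / (x + y) ≤ D / Real.sqrt (x * y) := by
  have hs : 0 < Real.sqrt (x * y) := Real.sqrt_pos.2 (by positivity)
  have hsq : Real.sqrt (x * y) * Real.sqrt (x * y) = x * y :=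
    Real.mul_self_sqrt (by positivity)
  rw [div_le_div_iff₀ (by positivity) hs]
  nlinarith [mul_le_mul_of_nonneg_right hxD hy.le, mul_le_mul_of_nonneg_right hyD hx.le]

lemma step_high_eq {D x y : ℝ} (hx : 0 < x) (hy : 0 < y) (hxD : x ≤ D) (hyD : y ≤ D)
    (h : 2 * Real.sqrt (x * y) / (x + y) = D / Real.sqrt (x * y)) : x = D ∧ y = D := by
  have hs : 0 < Real.sqrt (x * y) := Real.sqrt_pos.2 (by positivity)
  have hsq : Real.sqrt (x * y) * Real.sqrt (x * y) = x * y :=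
    Real.mul_self_sqrt (by positivity)
  rw [div_eq_div_iff (by positivity : (0:ℝ) < x + y).ne' hs.ne'] at h
  have h' : D * (x + y) = 2 * (x * y) := by nlinarith
  have h1 : x * y ≤ D * x := by nlinarith [mul_le_mul_of_nonneg_right hyD hx.le]
  have h2 : x * y ≤ D * y := by nlinarith [mul_le_mul_of_nonneg_right hxD hy.le]
  have e1 : D * y = x * y := by nlinarith
  constructor
  · exact (mul_right_cancel₀ hy.ne' (by linarith : D * y = x * y)).symm
  · have : D * x = y * x := by nlinarith
    exact (mul_right_cancel₀ hx.ne' this).symm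

lemma step2_low {d D x y a : ℝ} (hd : 0 < d) (hx : 0 < x) (hy : 0 < y)
    (hxD : x ≤ D) (hyD : y ≤ D) (ha : -(1/2) ≤ a) :
    d * D ^ (-(2 * a) - 1) * (x * y) ^ a ≤ d / Real.sqrt (x * y) := by
  have hD : 0 < D := hx.trans_le hxD
  have hxy : 0 < x * y := mul_pos hx hy
  have key : (x * y) ^ (a + 1/2) ≤ D ^ (2 * a + 1) := by
    have h1 : (x * y) ^ (a + 1/2) ≤ (D * D) ^ (a + 1/2) :=
      Real.rpow_le_rpow hxy.le (mul_le_mul hxD hyD hy.le hD.le) (by linarith)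
    calc (x * y) ^ (a + 1/2) ≤ (D * D) ^ (a + 1/2) := h1
      _ = D ^ (2 * a + 1) := by
          rw [Real.mul_rpow hD.le hD.le, ← Real.rpow_add hD]; ring_nf
  have e1 : (x * y) ^ a = (x * y) ^ (a + 1/2) * (x * y) ^ (-(1/2) : ℝ) := by
    rw [← Real.rpow_add hxy]; norm_num
  have e2 : D ^ (-(2 * a) - 1) = (D ^ (2 * a + 1))⁻¹ := by
    rw [← Real.rpow_neg hD.le]; ring_nf
  have hpos : (0:ℝ) < (x * y) ^ (-(1/2) : ℝ) := Real.rpow_pos_of_pos hxy _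
  have hDpos : (0:ℝ) < D ^ (2 * a + 1) := Real.rpow_pos_of_pos hD _
  calc d * D ^ (-(2 * a) - 1) * (x * y) ^ a
      = d * (x * y) ^ (-(1/2) : ℝ) * ((x * y) ^ (a + 1/2) / D ^ (2 * a + 1)) := by
        rw [e1, e2]; ring
    _ ≤ d * (x * y) ^ (-(1/2) : ℝ) * 1 := by
        apply mul_le_mul_of_nonneg_left _ (by positivity)
        rw [div_le_one hDpos]; exact key
    _ = d / Real.sqrt (x * y) := by
        rw [mul_one, Real.sqrt_eq_rpow, Real.rpow_neg hxy.le]; ring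

lemma step2_high {d D x y a : ℝ} (hd : 0 < d) (hdx : d ≤ x) (hdy : d ≤ y)
    (hD : 0 < D) (ha : -(1/2) ≤ a) :
    D / Real.sqrt (x * y) ≤ D * d ^ (-(2 * a) - 1) * (x * y) ^ a := by
  have hx : 0 < x := hd.trans_le hdx
  have hy : 0 < y := hd.trans_le hdy
  have hxy : 0 < x * y := mul_pos hx hy
  have key : d ^ (2 * a + 1) ≤ (x * y) ^ (a + 1/2) := by
    have h1 : (d * d) ^ (a + 1/2) ≤ (x * y) ^ (a + 1/2) :=
      Real.rpow_le_rpow (by positivity) (mul_le_mul hdx hdy hd.le hx.le) (by linarith)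
    calc d ^ (2 * a + 1) = (d * d) ^ (a + 1/2) := by
          rw [Real.mul_rpow hd.le hd.le, ← Real.rpow_add hd]; ring_nf
      _ ≤ (x * y) ^ (a + 1/2) := h1
  have e1 : (x * y) ^ a = (x * y) ^ (a + 1/2) * (x * y) ^ (-(1/2) : ℝ) := by
    rw [← Real.rpow_add hxy]; norm_num
  have e2 : d ^ (-(2 * a) - 1) = (d ^ (2 * a + 1))⁻¹ := by
    rw [← Real.rpow_neg hd.le]; ring_nf
  have hpos : (0:ℝ) < (x * y) ^ (-(1/2) : ℝ) := Real.rpow_pos_of_pos hxy _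
  have hdpos : (0:ℝ) < d ^ (2 * a + 1) := Real.rpow_pos_of_pos hd _
  calc D / Real.sqrt (x * y)
      = D * (x * y) ^ (-(1/2) : ℝ) * 1 := by
        rw [mul_one, Real.sqrt_eq_rpow, Real.rpow_neg hxy.le]; ring
    _ ≤ D * (x * y) ^ (-(1/2) : ℝ) * ((x * y) ^ (a + 1/2) / d ^ (2 * a + 1)) := by
        apply mul_le_mul_of_nonneg_left _ (by positivity)
        rw [le_div_iff₀ hdpos, one_mul]; exact key
    _ = D * d ^ (-(2 * a) - 1) * (x * y) ^ a := by
        rw [e1, e2]; ring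

lemma reg_term {k a : ℝ} (hk : 0 < k) :
    k * k ^ (-(2 * a) - 1) * ((k : ℝ) * k) ^ a = 2 * Real.sqrt (k * k) / (k + k) := by
  have h1 : (k * k) ^ a = k ^ (2 * a) := by
    rw [Real.mul_rpow hk.le hk.le, ← Real.rpow_add hk]; ring_nf
  have h2 : 2 * Real.sqrt (k * k) / (k + k) = 1 := by
    rw [Real.sqrt_mul_self hk.le]; field_simp; ring
  rw [h1, h2]
  calc k * k ^ (-(2 * a) - 1) * k ^ (2 * a)
      = k ^ (1:ℝ) * k ^ (-(2 * a) - 1) * k ^ (2 * a) := by rw [Real.rpow_one]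
    _ = k ^ ((1:ℝ) + (-(2 * a) - 1) + 2 * a) := by rw [← Real.rpow_add hk, ← Real.rpow_add hk]
    _ = 1 := by
        have : (1:ℝ) + (-(2 * a) - 1) + 2 * a = 0 := by ring
        rw [this, Real.rpow_zero]

/- ### Auxiliary graph lemmas -/

lemma exists_adj_all (G : SimpleGraph V) [Fintype V] [DecidableRel G.Adj]
    (hc : G.Connected) (hm : G.edgeFinset.Nonempty) (v : V) : ∃ w, G.Adj v w := by
  obtain ⟨e, he⟩ := hm
  rw [SimpleGraph.mem_edgeFinset] at he
  induction e using Sym2.ind with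
  | _ u w =>
    rw [SimpleGraph.mem_edgeSet] at he
    obtain ⟨p⟩ := hc.preconnected v u
    cases p with
    | nil => exact ⟨w, he⟩
    | cons h _ => exact ⟨_, h⟩

theorem stmt12 (G : SimpleGraph V) [Fintype V] [DecidableRel G.Adj]
    (hc : G.Connected) (hm : G.edgeFinset.Nonempty) (α : ℝ) (hα : -(1/2) ≤ α) (hα0 : α ≠ 0) :
    (G.minDegree : ℝ) * (G.maxDegree : ℝ) ^ (-(2 * α) - 1) * genRandic G α ≤ GA1 G ∧
    GA1 G ≤ (G.maxDegree : ℝ) * (G.minDegree : ℝ) ^ (-(2 * α) - 1) * genRandic G α ∧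
    (GA1 G = (G.minDegree : ℝ) * (G.maxDegree : ℝ) ^ (-(2 * α) - 1) * genRandic G α ↔ GraphRegular G) ∧
    (GA1 G = (G.maxDegree : ℝ) * (G.minDegree : ℝ) ^ (-(2 * α) - 1) * genRandic G α ↔ GraphRegular G) := by
  classical
  haveI hne : Nonempty V := hc.nonempty
  -- basic degree facts
  have hmin1 : 1 ≤ G.minDegree := by
    obtain ⟨v, hv⟩ := G.exists_minimal_degree_vertex
    rw [hv]
    obtain ⟨w, hw⟩ := exists_adj_all G hc hm v
    exact (G.degree_pos_iff_exists_adj v).2 ⟨w, hw⟩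
  have hd : (0:ℝ) < (G.minDegree : ℝ) := by exact_mod_cast hmin1
  have hdeg_lo : ∀ u : V, (G.minDegree : ℝ) ≤ (G.degree u : ℝ) := fun u => by
    exact_mod_cast G.minDegree_le_degree u
  have hdeg_hi : ∀ u : V, (G.degree u : ℝ) ≤ (G.maxDegree : ℝ) := fun u => by
    exact_mod_cast G.degree_le_maxDegree u
  have hdeg_pos : ∀ u : V, (0:ℝ) < (G.degree u : ℝ) := fun u => hd.trans_le (hdeg_lo u)
  have hD : (0:ℝ) < (G.maxDegree : ℝ) := by
    obtain ⟨v⟩ := id hne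
    exact (hdeg_pos v).trans_le (hdeg_hi v)
  -- per-edge inequalities
  have low_pt : ∀ u v : V,
      (G.minDegree : ℝ) * (G.maxDegree : ℝ) ^ (-(2 * α) - 1) *
        ((G.degree u : ℝ) * (G.degree v : ℝ)) ^ α ≤
      2 * Real.sqrt ((G.degree u : ℝ) * (G.degree v : ℝ)) /
        ((G.degree u : ℝ) + (G.degree v : ℝ)) := fun u v =>
    (step2_low hd (hdeg_pos u) (hdeg_pos v) (hdeg_hi u) (hdeg_hi v) hα).trans
      (step_low hd (hdeg_lo u) (hdeg_lo v))
  have high_pt : ∀ u v : V,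
      2 * Real.sqrt ((G.degree u : ℝ) * (G.degree v : ℝ)) /
        ((G.degree u : ℝ) + (G.degree v : ℝ)) ≤
      (G.maxDegree : ℝ) * (G.minDegree : ℝ) ^ (-(2 * α) - 1) *
        ((G.degree u : ℝ) * (G.degree v : ℝ)) ^ α := fun u v =>
    (step_high (hdeg_pos u) (hdeg_pos v) (hdeg_hi u) (hdeg_hi v)).trans
      (step2_high hd (hdeg_lo u) (hdeg_lo v) hD hα)
  -- sum inequalities
  have hle_low : ∀ e ∈ G.edgeFinset,
      (G.minDegree : ℝ) * (G.maxDegree : ℝ) ^ (-(2 * α) - 1) *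
        Sym2.lift ⟨fun u v => ((G.degree u : ℝ) * (G.degree v : ℝ)) ^ α,
          fun u v => by dsimp only; rw [mul_comm ((G.degree u : ℝ)) ((G.degree v : ℝ))]⟩ e ≤
      Sym2.lift ⟨fun u v => 2 * Real.sqrt ((G.degree u : ℝ) * (G.degree v : ℝ)) /
          ((G.degree u : ℝ) + (G.degree v : ℝ)),
          fun u v => by dsimp only; rw [mul_comm ((G.degree u : ℝ)) ((G.degree v : ℝ)), add_comm ((G.degree u : ℝ)) ((G.degree v : ℝ))]⟩ e := by
    intro e he
    induction e using Sym2.ind with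
    | _ u v => simpa using low_pt u v
  have hle_high : ∀ e ∈ G.edgeFinset,
      Sym2.lift ⟨fun u v => 2 * Real.sqrt ((G.degree u : ℝ) * (G.degree v : ℝ)) /
          ((G.degree u : ℝ) + (G.degree v : ℝ)),
          fun u v => by dsimp only; rw [mul_comm ((G.degree u : ℝ)) ((G.degree v : ℝ)), add_comm ((G.degree u : ℝ)) ((G.degree v : ℝ))]⟩ e ≤
      (G.maxDegree : ℝ) * (G.minDegree : ℝ) ^ (-(2 * α) - 1) *
        Sym2.lift ⟨fun u v => ((G.degree u : ℝ) * (G.degree v : ℝ)) ^ α,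
          fun u v => by dsimp only; rw [mul_comm ((G.degree u : ℝ)) ((G.degree v : ℝ))]⟩ e := by
    intro e he
    induction e using Sym2.ind with
    | _ u v => simpa using high_pt u v
  -- sum expressions
  have eGA : GA1 G = ∑ e ∈ G.edgeFinset,
      Sym2.lift ⟨fun u v => 2 * Real.sqrt ((G.degree u : ℝ) * (G.degree v : ℝ)) /
          ((G.degree u : ℝ) + (G.degree v : ℝ)),
          fun u v => by dsimp only; rw [mul_comm ((G.degree u : ℝ)) ((G.degree v : ℝ)), add_comm ((G.degree u : ℝ)) ((G.degree v : ℝ))]⟩ e := rfl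
  have eLow : (G.minDegree : ℝ) * (G.maxDegree : ℝ) ^ (-(2 * α) - 1) * genRandic G α =
      ∑ e ∈ G.edgeFinset, (G.minDegree : ℝ) * (G.maxDegree : ℝ) ^ (-(2 * α) - 1) *
        Sym2.lift ⟨fun u v => ((G.degree u : ℝ) * (G.degree v : ℝ)) ^ α,
          fun u v => by dsimp only; rw [mul_comm ((G.degree u : ℝ)) ((G.degree v : ℝ))]⟩ e := by
    unfold genRandic edgeSum; rw [Finset.mul_sum]
  have eHigh : (G.maxDegree : ℝ) * (G.minDegree : ℝ) ^ (-(2 * α) - 1) * genRandic G α =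
      ∑ e ∈ G.edgeFinset, (G.maxDegree : ℝ) * (G.minDegree : ℝ) ^ (-(2 * α) - 1) *
        Sym2.lift ⟨fun u v => ((G.degree u : ℝ) * (G.degree v : ℝ)) ^ α,
          fun u v => by dsimp only; rw [mul_comm ((G.degree u : ℝ)) ((G.degree v : ℝ))]⟩ e := by
    unfold genRandic edgeSum; rw [Finset.mul_sum]
  have ineq_low : (G.minDegree : ℝ) * (G.maxDegree : ℝ) ^ (-(2 * α) - 1) * genRandic G α ≤ GA1 G := by
    rw [eLow, eGA]; exact Finset.sum_le_sum hle_low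
  have ineq_high : GA1 G ≤ (G.maxDegree : ℝ) * (G.minDegree : ℝ) ^ (-(2 * α) - 1) * genRandic G α := by
    rw [eHigh, eGA]; exact Finset.sum_le_sum hle_high
  -- regular implies degrees
  have reg_deg : GraphRegular G → G.minDegree = G.maxDegree ∧
      ∀ v : V, G.degree v = G.minDegree := by
    rintro ⟨k, hk⟩
    obtain ⟨v⟩ := id hne
    have hmind : G.minDegree = k := by
      have h1 := G.minDegree_le_degree v
      have h2 := G.le_minDegree_of_forall_le_degree k (fun w => (hk w).ge)
      rw [hk v] at h1; omega
    have hmaxd : G.maxDegree = k := by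
      have h1 := G.degree_le_maxDegree v
      have h2 := G.maxDegree_le_of_forall_degree_le k (fun w => (hk w).le)
      rw [hk v] at h1; omega
    exact ⟨hmind.trans hmaxd.symm, fun w => (hk w).trans hmind.symm⟩
  -- backward directions
  have back_low : GraphRegular G →
      GA1 G = (G.minDegree : ℝ) * (G.maxDegree : ℝ) ^ (-(2 * α) - 1) * genRandic G α := by
    intro hreg
    obtain ⟨hdD, hall⟩ := reg_deg hreg
    rw [eLow, eGA, ← hdD]
    refine Finset.sum_congr rfl fun e he => ?_
    induction e using Sym2.ind with
    | _ u v =>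
      simp only [Sym2.lift_mk]
      rw [hall u, hall v]
      exact (reg_term hd).symm
  have back_high : GraphRegular G →
      GA1 G = (G.maxDegree : ℝ) * (G.minDegree : ℝ) ^ (-(2 * α) - 1) * genRandic G α := by
    intro hreg
    obtain ⟨hdD, hall⟩ := reg_deg hreg
    rw [eHigh, eGA, ← hdD]
    refine Finset.sum_congr rfl fun e he => ?_
    induction e using Sym2.ind with
    | _ u v =>
      simp only [Sym2.lift_mk]
      rw [hall u, hall v]
      exact (reg_term hd).symm
  refine ⟨ineq_low, ineq_high, ⟨fun h => ?_, back_low⟩, ⟨fun h => ?_, back_high⟩⟩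
  · -- lower equality ⇒ regular
    have h2 : (∑ e ∈ G.edgeFinset, (G.minDegree : ℝ) * (G.maxDegree : ℝ) ^ (-(2 * α) - 1) *
        Sym2.lift ⟨fun u v => ((G.degree u : ℝ) * (G.degree v : ℝ)) ^ α,
          fun u v => by dsimp only; rw [mul_comm ((G.degree u : ℝ)) ((G.degree v : ℝ))]⟩ e) =
        ∑ e ∈ G.edgeFinset,
        Sym2.lift ⟨fun u v => 2 * Real.sqrt ((G.degree u : ℝ) * (G.degree v : ℝ)) /
          ((G.degree u : ℝ) + (G.degree v : ℝ)),
          fun u v => by dsimp only; rw [mul_comm ((G.degree u : ℝ)) ((G.degree v : ℝ)), add_comm ((G.degree u : ℝ)) ((G.degree v : ℝ))]⟩ e :=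
      eLow.symm.trans (h.symm.trans eGA)
    have hpt := (Finset.sum_eq_sum_iff_of_le hle_low).1 h2
    have hdegs : ∀ u v : V, G.Adj u v → G.degree u = G.minDegree := by
      intro u v huv
      have he : s(u, v) ∈ G.edgeFinset := SimpleGraph.mem_edgeFinset.2 huv
      have heq := hpt _ he
      simp only [Sym2.lift_mk] at heq
      have hB : (G.minDegree : ℝ) / Real.sqrt ((G.degree u : ℝ) * (G.degree v : ℝ)) =
          2 * Real.sqrt ((G.degree u : ℝ) * (G.degree v : ℝ)) /
            ((G.degree u : ℝ) + (G.degree v : ℝ)) :=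
        le_antisymm (step_low hd (hdeg_lo u) (hdeg_lo v))
          (heq.symm.le.trans (step2_low hd (hdeg_pos u) (hdeg_pos v) (hdeg_hi u) (hdeg_hi v) hα))
      have := (step_low_eq hd (hdeg_lo u) (hdeg_lo v) hB).1
      exact_mod_cast this
    exact ⟨G.minDegree, fun v => by
      obtain ⟨w, hw⟩ := exists_adj_all G hc hm v
      exact hdegs v w hw⟩
  · -- upper equality ⇒ regular
    have h2 : (∑ e ∈ G.edgeFinset,
        Sym2.lift ⟨fun u v => 2 * Real.sqrt ((G.degree u : ℝ) * (G.degree v : ℝ)) /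
          ((G.degree u : ℝ) + (G.degree v : ℝ)),
          fun u v => by dsimp only; rw [mul_comm ((G.degree u : ℝ)) ((G.degree v : ℝ)), add_comm ((G.degree u : ℝ)) ((G.degree v : ℝ))]⟩ e) =
        ∑ e ∈ G.edgeFinset, (G.maxDegree : ℝ) * (G.minDegree : ℝ) ^ (-(2 * α) - 1) *
        Sym2.lift ⟨fun u v => ((G.degree u : ℝ) * (G.degree v : ℝ)) ^ α,
          fun u v => by dsimp only; rw [mul_comm ((G.degree u : ℝ)) ((G.degree v : ℝ))]⟩ e :=
      eGA.symm.trans (h.trans eHigh)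
    have hpt := (Finset.sum_eq_sum_iff_of_le hle_high).1 h2
    have hdegs : ∀ u v : V, G.Adj u v → G.degree u = G.maxDegree := by
      intro u v huv
      have he : s(u, v) ∈ G.edgeFinset := SimpleGraph.mem_edgeFinset.2 huv
      have heq := hpt _ he
      simp only [Sym2.lift_mk] at heq
      have hB : 2 * Real.sqrt ((G.degree u : ℝ) * (G.degree v : ℝ)) /
            ((G.degree u : ℝ) + (G.degree v : ℝ)) =
          (G.maxDegree : ℝ) / Real.sqrt ((G.degree u : ℝ) * (G.degree v : ℝ)) :=
        le_antisymm (step_high (hdeg_pos u) (hdeg_pos v) (hdeg_hi u) (hdeg_hi v))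
          ((step2_high hd (hdeg_lo u) (hdeg_lo v) hD hα).trans heq.symm.le)
      have := (step_high_eq (hdeg_pos u) (hdeg_pos v) (hdeg_hi u) (hdeg_hi v) hB).1
      exact_mod_cast this
    exact ⟨G.maxDegree, fun v => by
      obtain ⟨w, hw⟩ := exists_adj_all G hc hm v
      exact hdegs v w hw⟩
end

section
/- For any graph G, (4Δ²δ²·√(2δ·M₁(G)·R_{−1}(G)))/((Δ²+δ²)(δ+Δ)²) ≤ GA₁(G) ≤ √(2Δ·M₁(G)·R_{−1}(G))/2, with each equality if and only if G is regular. -/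
open Finset Real

variable {V : Type*}

section AuxGraph
variable {V : Type*} (G : SimpleGraph V) [Fintype V] [DecidableRel G.Adj]
open SimpleGraph

lemma aux_sum_dart_edge (F : Sym2 V → ℝ) :
    ∑ d : G.Dart, F d.edge = 2 * ∑ e ∈ G.edgeFinset, F e := by
  classical
  rw [← Finset.sum_fiberwise_of_maps_to (g := Dart.edge) (t := G.edgeFinset)
    (fun d _ => by rw [mem_edgeFinset]; exact d.edge_mem) (fun d => F d.edge), Finset.mul_sum]
  refine Finset.sum_congr rfl fun e he => ?_
  have hcard := G.dart_edge_fiber_card e (by rwa [← mem_edgeFinset])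
  calc ∑ d ∈ Finset.univ.filter fun d : G.Dart => d.edge = e, F d.edge
      = ∑ d ∈ Finset.univ.filter fun d : G.Dart => d.edge = e, F e :=
        Finset.sum_congr rfl fun d hd => by rw [(Finset.mem_filter.mp hd).2]
    _ = 2 * F e := by rw [Finset.sum_const, hcard, nsmul_eq_mul]; norm_num

lemma aux_sum_dart_fst (f : V → ℝ) :
    ∑ d : G.Dart, f d.fst = ∑ v, (G.degree v : ℝ) * f v := by
  classical
  rw [← Finset.sum_fiberwise_of_maps_to (g := fun d : G.Dart => d.fst) (t := Finset.univ)
    (fun d _ => Finset.mem_univ d.fst) (fun d => f d.fst)]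
  refine Finset.sum_congr rfl fun v _ => ?_
  calc ∑ d ∈ Finset.univ.filter fun d : G.Dart => d.fst = v, f d.fst
      = ∑ d ∈ Finset.univ.filter fun d : G.Dart => d.fst = v, f v :=
        Finset.sum_congr rfl fun d hd => by rw [(Finset.mem_filter.mp hd).2]
    _ = (G.degree v : ℝ) * f v := by
        rw [Finset.sum_const, ← G.dart_fst_fiber_card_eq_degree v, nsmul_eq_mul]

lemma aux_sum_edges_add :
    (∑ e ∈ G.edgeFinset,
      Sym2.lift ⟨fun u v => (G.degree u : ℝ) + (G.degree v : ℝ), fun _ _ => add_comm _ _⟩ e)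
      = M1 G := by
  have key := aux_sum_dart_edge G
    (Sym2.lift ⟨fun u v => (G.degree u : ℝ) + (G.degree v : ℝ), fun _ _ => add_comm _ _⟩)
  have h2 : ∀ d : G.Dart,
      Sym2.lift ⟨fun u v => (G.degree u : ℝ) + (G.degree v : ℝ), fun _ _ => add_comm _ _⟩ d.edge
      = (G.degree d.fst : ℝ) + G.degree d.snd := fun d => rfl
  simp only [h2] at key
  have e1 : ∑ d : G.Dart, ((G.degree d.fst : ℝ) + (G.degree d.snd : ℝ))
      = (∑ d : G.Dart, (G.degree d.fst : ℝ)) + ∑ d : G.Dart, (G.degree d.snd : ℝ) :=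
    Finset.sum_add_distrib
  have e2 : ∑ d : G.Dart, (G.degree d.snd : ℝ) = ∑ d : G.Dart, (G.degree d.fst : ℝ) :=
    Fintype.sum_bijective Dart.symm Dart.symm_involutive.bijective _ _ (fun _ => rfl)
  have e3 : ∑ d : G.Dart, (G.degree d.fst : ℝ) = ∑ v, (G.degree v : ℝ) * (G.degree v : ℝ) :=
    aux_sum_dart_fst G (fun v => (G.degree v : ℝ))
  have e4 : M1 G = ∑ v, (G.degree v : ℝ) * (G.degree v : ℝ) :=
    Finset.sum_congr rfl fun v _ => by ring
  linarith [key, e1, e2, e3, e4]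

end AuxGraph

section AuxReal

lemma aux_case1 (d D s : ℝ) (hd : 0 < d) (hdD : d ≤ D) (h1 : 2*d ≤ s) (h2 : s ≤ d+D) :
    2*d*D^2*s^3 ≤ (s-d)^2*(d+D)^4 := by
  obtain ⟨u, hu, rfl⟩ : ∃ u, 0 ≤ u ∧ s = 2*d+u := ⟨s-2*d, by linarith, by ring⟩
  obtain ⟨v, hv, rfl⟩ : ∃ v, 0 ≤ v ∧ D = d+u+v := ⟨D-d-u, by linarith, by ring⟩
  have hd0 := hd.le
  nlinarith [mul_nonneg (mul_nonneg hd0 hd0) hd0, mul_nonneg (mul_nonneg hd0 hd0) hu,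
    mul_nonneg (mul_nonneg hd0 hd0) hv, mul_nonneg (mul_nonneg hd0 hu) hu,
    mul_nonneg (mul_nonneg hd0 hu) hv, mul_nonneg (mul_nonneg hd0 hv) hv,
    mul_nonneg (mul_nonneg hu hu) hu, mul_nonneg (mul_nonneg hu hu) hv,
    mul_nonneg (mul_nonneg hu hv) hv, mul_nonneg (mul_nonneg hv hv) hv]

lemma aux_case2 (d D s : ℝ) (hd : 0 < d) (hdD : d ≤ D) (h1 : d+D ≤ s) (h2 : s ≤ 2*D) :
    2*d^3*s^3 ≤ (s-D)^2*(d+D)^4 := by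
  obtain ⟨u, hu, hs⟩ : ∃ u, 0 ≤ u ∧ s = d+D+u := ⟨s-d-D, by linarith, by ring⟩
  obtain ⟨v, hv, hD⟩ : ∃ v, 0 ≤ v ∧ D = d+u+v := ⟨D-d-u, by linarith, by ring⟩
  subst hD; subst hs
  have hd0 := hd.le
  nlinarith [mul_nonneg (mul_nonneg hd0 hd0) hd0, mul_nonneg (mul_nonneg hd0 hd0) hu,
    mul_nonneg (mul_nonneg hd0 hd0) hv, mul_nonneg (mul_nonneg hd0 hu) hu,
    mul_nonneg (mul_nonneg hd0 hu) hv, mul_nonneg (mul_nonneg hd0 hv) hv,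
    mul_nonneg (mul_nonneg hu hu) hu, mul_nonneg (mul_nonneg hu hu) hv,
    mul_nonneg (mul_nonneg hu hv) hv, mul_nonneg (mul_nonneg hv hv) hv]

lemma aux_case1' (d D s : ℝ) (hd : 0 < d) (hdD : d < D) (h1 : 2*d ≤ s) (h2 : s ≤ d+D) :
    2*d*D^2*s^3 < (s-d)^2*(d+D)^4 := by
  obtain ⟨u, hu, rfl⟩ : ∃ u, 0 ≤ u ∧ s = 2*d+u := ⟨s-2*d, by linarith, by ring⟩
  obtain ⟨v, hv, rfl⟩ : ∃ v, 0 ≤ v ∧ D = d+u+v := ⟨D-d-u, by linarith, by ring⟩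
  have hd0 := hd.le
  have hpos : 0 < d^3*v^3 + d^5*u := by
    rcases eq_or_lt_of_le hu with h'|h'
    · have h1 := mul_pos (pow_pos hd 3) (pow_pos (by nlinarith : (0:ℝ) < v) 3)
      have h2 : 0 ≤ d^5*u := by positivity
      linarith
    · have h1 := mul_pos (pow_pos hd 5) h'
      have h2 : 0 ≤ d^3*v^3 := by positivity
      linarith
  nlinarith [hpos, mul_nonneg (mul_nonneg hd0 hd0) hd0, mul_nonneg (mul_nonneg hd0 hd0) hu,
    mul_nonneg (mul_nonneg hd0 hd0) hv, mul_nonneg (mul_nonneg hd0 hu) hu,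
    mul_nonneg (mul_nonneg hd0 hu) hv, mul_nonneg (mul_nonneg hd0 hv) hv,
    mul_nonneg (mul_nonneg hu hu) hu, mul_nonneg (mul_nonneg hu hu) hv,
    mul_nonneg (mul_nonneg hu hv) hv, mul_nonneg (mul_nonneg hv hv) hv]

lemma aux_case2' (d D s : ℝ) (hd : 0 < d) (hdD : d < D) (h1 : d+D ≤ s) (h2 : s ≤ 2*D) :
    2*d^3*s^3 < (s-D)^2*(d+D)^4 := by
  obtain ⟨u, hu, hs⟩ : ∃ u, 0 ≤ u ∧ s = d+D+u := ⟨s-d-D, by linarith, by ring⟩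
  obtain ⟨v, hv, hD⟩ : ∃ v, 0 ≤ v ∧ D = d+u+v := ⟨D-d-u, by linarith, by ring⟩
  subst hD; subst hs
  have hd0 := hd.le
  have hpos : 0 < d^5*(u+v) := by
    have : 0 < u + v := by nlinarith
    positivity
  nlinarith [hpos, mul_nonneg (mul_nonneg hd0 hd0) hd0, mul_nonneg (mul_nonneg hd0 hd0) hu,
    mul_nonneg (mul_nonneg hd0 hd0) hv, mul_nonneg (mul_nonneg hd0 hu) hu,
    mul_nonneg (mul_nonneg hd0 hu) hv, mul_nonneg (mul_nonneg hd0 hv) hv,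
    mul_nonneg (mul_nonneg hu hu) hu, mul_nonneg (mul_nonneg hu hu) hv,
    mul_nonneg (mul_nonneg hu hv) hv, mul_nonneg (mul_nonneg hv hv) hv]

lemma aux_edge_lower (d D x y : ℝ) (hd : 0 < d) (hdD : d ≤ D) (hx1 : d ≤ x) (hx2 : x ≤ D)
    (hy1 : d ≤ y) (hy2 : y ≤ D) :
    2*d^3*D^2*(x+y)^3 ≤ (x*y)^2*(d+D)^4 := by
  rcases le_total (x+y) (d+D) with hs|hs
  · have hxy : d*(x+y-d) ≤ x*y := by nlinarith
    have h0 : 0 ≤ d*(x+y-d) := by nlinarith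
    have key := aux_case1 d D (x+y) hd hdD (by linarith) hs
    have hsq : (d*(x+y-d))^2 ≤ (x*y)^2 := pow_le_pow_left₀ h0 hxy 2
    calc 2*d^3*D^2*(x+y)^3 = d^2 * (2*d*D^2*(x+y)^3) := by ring
      _ ≤ d^2 * ((x+y-d)^2*(d+D)^4) := mul_le_mul_of_nonneg_left key (sq_nonneg d)
      _ = (d*(x+y-d))^2*(d+D)^4 := by ring
      _ ≤ (x*y)^2*(d+D)^4 := mul_le_mul_of_nonneg_right hsq (by positivity)
  · have hxy : D*(x+y-D) ≤ x*y := by nlinarith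
    have h0 : 0 ≤ D*(x+y-D) := by nlinarith
    have key := aux_case2 d D (x+y) hd hdD hs (by linarith)
    have hsq : (D*(x+y-D))^2 ≤ (x*y)^2 := pow_le_pow_left₀ h0 hxy 2
    calc 2*d^3*D^2*(x+y)^3 = D^2 * (2*d^3*(x+y)^3) := by ring
      _ ≤ D^2 * ((x+y-D)^2*(d+D)^4) := mul_le_mul_of_nonneg_left key (sq_nonneg D)
      _ = (D*(x+y-D))^2*(d+D)^4 := by ring
      _ ≤ (x*y)^2*(d+D)^4 := mul_le_mul_of_nonneg_right hsq (by positivity)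

lemma aux_edge_lower' (d D x y : ℝ) (hd : 0 < d) (hdD : d < D) (hx1 : d ≤ x) (hx2 : x ≤ D)
    (hy1 : d ≤ y) (hy2 : y ≤ D) :
    2*d^3*D^2*(x+y)^3 < (x*y)^2*(d+D)^4 := by
  rcases le_total (x+y) (d+D) with hs|hs
  · have hxy : d*(x+y-d) ≤ x*y := by nlinarith
    have h0 : 0 ≤ d*(x+y-d) := by nlinarith
    have key := aux_case1' d D (x+y) hd hdD (by linarith) hs
    have hsq : (d*(x+y-d))^2 ≤ (x*y)^2 := pow_le_pow_left₀ h0 hxy 2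
    calc 2*d^3*D^2*(x+y)^3 = d^2 * (2*d*D^2*(x+y)^3) := by ring
      _ < d^2 * ((x+y-d)^2*(d+D)^4) := by
          exact mul_lt_mul_of_pos_left key (by positivity)
      _ = (d*(x+y-d))^2*(d+D)^4 := by ring
      _ ≤ (x*y)^2*(d+D)^4 := mul_le_mul_of_nonneg_right hsq (by positivity)
  · have hxy : D*(x+y-D) ≤ x*y := by nlinarith
    have h0 : 0 ≤ D*(x+y-D) := by nlinarith
    have key := aux_case2' d D (x+y) hd hdD hs (by linarith)
    have hsq : (D*(x+y-D))^2 ≤ (x*y)^2 := pow_le_pow_left₀ h0 hxy 2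
    calc 2*d^3*D^2*(x+y)^3 = D^2 * (2*d^3*(x+y)^3) := by ring
      _ < D^2 * ((x+y-D)^2*(d+D)^4) := by
          exact mul_lt_mul_of_pos_left key (pow_pos (by linarith : (0:ℝ) < D) 2)
      _ = (D*(x+y-D))^2*(d+D)^4 := by ring
      _ ≤ (x*y)^2*(d+D)^4 := mul_le_mul_of_nonneg_right hsq (by positivity)

lemma aux_edge_upper (D x y : ℝ) (hx : 0 < x) (hy : 0 < y) (hx2 : x ≤ D) (hy2 : y ≤ D) :
    8*(x*y)^2 ≤ D*(x+y)^3 := by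
  have h1 : 2*x*y ≤ D*(x+y) := by nlinarith
  have h2 : 4*(x*y) ≤ (x+y)^2 := by nlinarith [sq_nonneg (x-y)]
  nlinarith [mul_le_mul h1 h2 (by positivity) (by nlinarith)]

lemma aux_edge_upper' (D x y : ℝ) (hx : 0 < x) (hy : 0 < y) (hx2 : x < D) (hy2 : y ≤ D) :
    8*(x*y)^2 < D*(x+y)^3 := by
  have h1 : 2*x*y < D*(x+y) := by nlinarith
  have h2 : 4*(x*y) ≤ (x+y)^2 := by nlinarith [sq_nonneg (x-y)]
  have h3 : (0:ℝ) < 4*(x*y) := by nlinarith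
  nlinarith [mul_lt_mul h1 h2 h3 (by nlinarith)]

lemma aux_amgm (X Y : ℝ) (hX : 0 ≤ X) (hY : 0 ≤ Y) : 2*Real.sqrt (X*Y) ≤ X + Y := by
  rw [Real.sqrt_mul hX]
  nlinarith [sq_nonneg (Real.sqrt X - Real.sqrt Y), Real.sq_sqrt hX, Real.sq_sqrt hY,
    Real.sqrt_nonneg X, Real.sqrt_nonneg Y]

lemma aux_ratio_upper (D x y : ℝ) (hx : 0 < x) (hy : 0 < y) (hx2 : x ≤ D) (hy2 : y ≤ D) :
    4*(x*y)/(x+y)^3 ≤ D/2 * (1/(x*y)) := by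
  have key := aux_edge_upper D x y hx hy hx2 hy2
  rw [show D/2 * (1/(x*y)) = D/(2*(x*y)) by ring, div_le_div_iff₀ (by positivity) (by positivity)]
  nlinarith [key]

lemma aux_ratio_upper' (D x y : ℝ) (hx : 0 < x) (hy : 0 < y) (hx2 : x < D) (hy2 : y ≤ D) :
    4*(x*y)/(x+y)^3 < D/2 * (1/(x*y)) := by
  have key := aux_edge_upper' D x y hx hy hx2 hy2
  rw [show D/2 * (1/(x*y)) = D/(2*(x*y)) by ring, div_lt_div_iff₀ (by positivity) (by positivity)]
  nlinarith [key]

lemma aux_ratio_lower (d D x y : ℝ) (hd : 0 < d) (hdD : d ≤ D) (hx1 : d ≤ x) (hx2 : x ≤ D)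
    (hy1 : d ≤ y) (hy2 : y ≤ D) :
    8*d^3*D^2/(d+D)^4 * (1/(x*y)) ≤ 4*(x*y)/(x+y)^3 := by
  have key := aux_edge_lower d D x y hd hdD hx1 hx2 hy1 hy2
  have hx0 : 0 < x := lt_of_lt_of_le hd hx1
  have hy0 : 0 < y := lt_of_lt_of_le hd hy1
  have hdD0 : (0:ℝ) < d + D := by linarith
  rw [div_mul_div_comm, mul_one, div_le_div_iff₀ (mul_pos (pow_pos hdD0 4) (mul_pos hx0 hy0))
    (pow_pos (by linarith : (0:ℝ) < x+y) 3)]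
  nlinarith [key]

lemma aux_ratio_lower' (d D x y : ℝ) (hd : 0 < d) (hdD : d < D) (hx1 : d ≤ x) (hx2 : x ≤ D)
    (hy1 : d ≤ y) (hy2 : y ≤ D) :
    8*d^3*D^2/(d+D)^4 * (1/(x*y)) < 4*(x*y)/(x+y)^3 := by
  have key := aux_edge_lower' d D x y hd hdD hx1 hx2 hy1 hy2
  have hx0 : 0 < x := lt_of_lt_of_le hd hx1
  have hy0 : 0 < y := lt_of_lt_of_le hd hy1
  have hdD0 : (0:ℝ) < d + D := by linarith
  rw [div_mul_div_comm, mul_one, div_lt_div_iff₀ (mul_pos (pow_pos hdD0 4) (mul_pos hx0 hy0))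
    (pow_pos (by linarith : (0:ℝ) < x+y) 3)]
  nlinarith [key]

lemma aux_sq_fb (x y : ℝ) (hx : 0 < x) (hy : 0 < y) :
    (2*Real.sqrt (x*y)/((x+y)*Real.sqrt (x+y)))^2 = 4*(x*y)/(x+y)^3 := by
  have h1 : (2*Real.sqrt (x*y)/((x+y)*Real.sqrt (x+y)))^2
      = (2^2*(x*y))/((x+y)^2*(x+y)) := by
    rw [div_pow, mul_pow, mul_pow, Real.sq_sqrt (by positivity : (0:ℝ) ≤ x*y),
      Real.sq_sqrt (by positivity : (0:ℝ) ≤ x+y)]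
  rw [h1]
  ring

lemma aux_mul_fafb (x y : ℝ) (hx : 0 < x) (hy : 0 < y) :
    2*Real.sqrt (x*y)/(x+y)
      = Real.sqrt (x+y) * (2*Real.sqrt (x*y)/((x+y)*Real.sqrt (x+y))) := by
  have ht : Real.sqrt (x+y) ≠ 0 := by positivity
  have hs : (x+y) ≠ 0 := by positivity
  field_simp

lemma aux_d_le_sqrt (d x y : ℝ) (hd : 0 ≤ d) (hx1 : d ≤ x) (hy1 : d ≤ y) :
    d ≤ Real.sqrt (x*y) := by
  rw [← Real.sqrt_sq hd]
  exact Real.sqrt_le_sqrt (by nlinarith)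

lemma aux_fb_le (d x y : ℝ) (hd : 0 < d) (hx1 : d ≤ x) (hy1 : d ≤ y) :
    2*Real.sqrt (x*y)/((x+y)*Real.sqrt (x+y)) ≤ 1/(2*d) * Real.sqrt (x+y) := by
  have hx0 : 0 < x := lt_of_lt_of_le hd hx1
  have hy0 : 0 < y := lt_of_lt_of_le hd hy1
  have hs0 : 0 < x + y := by linarith
  have hsq2 : (x+y)*(Real.sqrt (x+y)*Real.sqrt (x+y)) = (x+y)*(x+y) := by
    rw [Real.mul_self_sqrt hs0.le]
  have hdsq := aux_d_le_sqrt d x y hd.le hx1 hy1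
  have hxy2 : (Real.sqrt (x*y))^2 = x*y := Real.sq_sqrt (by positivity)
  have key : 4*d*Real.sqrt (x*y) ≤ (x+y)^2 := by
    nlinarith [sq_nonneg (x-y), Real.sqrt_nonneg (x*y)]
  rw [show 1/(2*d) * Real.sqrt (x+y) = Real.sqrt (x+y)/(2*d) by ring,
    div_le_div_iff₀ (by positivity) (by positivity)]
  nlinarith [hsq2, key]

lemma aux_fb_ge (d D x y : ℝ) (hd : 0 < d) (hx1 : d ≤ x) (hx2 : x ≤ D)
    (hy1 : d ≤ y) (hy2 : y ≤ D) :
    d/(2*D^2) * Real.sqrt (x+y) ≤ 2*Real.sqrt (x*y)/((x+y)*Real.sqrt (x+y)) := by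
  have hx0 : 0 < x := lt_of_lt_of_le hd hx1
  have hy0 : 0 < y := lt_of_lt_of_le hd hy1
  have hD0 : 0 < D := lt_of_lt_of_le hx0 hx2
  have hs0 : 0 < x + y := by linarith
  have hsq2 : (x+y)*(Real.sqrt (x+y)*Real.sqrt (x+y)) = (x+y)*(x+y) := by
    rw [Real.mul_self_sqrt hs0.le]
  have hdsq := aux_d_le_sqrt d x y hd.le hx1 hy1
  have key : d*(x+y)^2 ≤ 4*D^2*Real.sqrt (x*y) := by
    have hs2 : (x+y)^2 ≤ 4*D^2 := by nlinarith
    nlinarith [mul_nonneg (sub_nonneg.2 hdsq) (by positivity : (0:ℝ) ≤ 4*D^2),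
      mul_nonneg hd.le (sub_nonneg.2 hs2)]
  rw [show d/(2*D^2) * Real.sqrt (x+y) = d*Real.sqrt (x+y)/(2*D^2) by ring,
    div_le_div_iff₀ (by positivity) (by positivity)]
  nlinarith [hsq2, key]

end AuxReal

set_option maxHeartbeats 1000000 in
theorem stmt17 (G : SimpleGraph V) [Fintype V] [DecidableRel G.Adj]
    (hc : G.Connected) (hm : G.edgeFinset.Nonempty) :
    4 * (G.maxDegree : ℝ) ^ 2 * (G.minDegree : ℝ) ^ 2 *
        Real.sqrt (2 * (G.minDegree : ℝ) * M1 G * modZagreb G) /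
      (((G.maxDegree : ℝ) ^ 2 + (G.minDegree : ℝ) ^ 2) * ((G.minDegree : ℝ) + (G.maxDegree : ℝ)) ^ 2) ≤
      GA1 G ∧
    GA1 G ≤ Real.sqrt (2 * (G.maxDegree : ℝ) * M1 G * modZagreb G) / 2 ∧
    (GA1 G =
      4 * (G.maxDegree : ℝ) ^ 2 * (G.minDegree : ℝ) ^ 2 *
          Real.sqrt (2 * (G.minDegree : ℝ) * M1 G * modZagreb G) /
        (((G.maxDegree : ℝ) ^ 2 + (G.minDegree : ℝ) ^ 2) * ((G.minDegree : ℝ) + (G.maxDegree : ℝ)) ^ 2) ↔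
      GraphRegular G) ∧
    (GA1 G = Real.sqrt (2 * (G.maxDegree : ℝ) * M1 G * modZagreb G) / 2 ↔ GraphRegular G) := by
  classical
  obtain ⟨e₀, he₀⟩ := hm
  obtain ⟨u₀, v₀, hadj₀⟩ : ∃ u v, G.Adj u v := by
    revert he₀
    induction e₀ using Sym2.ind with
    | _ a b => exact fun h =>
        ⟨a, b, by rwa [SimpleGraph.mem_edgeFinset, SimpleGraph.mem_edgeSet] at h⟩
  haveI : Nonempty V := ⟨u₀⟩
  haveI : Nontrivial V := ⟨⟨u₀, v₀, hadj₀.ne⟩⟩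
  have hdegpos : ∀ v : V, 0 < G.degree v := by
    intro v
    obtain ⟨w, hw⟩ := exists_ne v
    obtain ⟨p⟩ := hc.preconnected v w
    exact (G.degree_pos_iff_exists_adj v).mpr
      ⟨_, p.adj_snd (SimpleGraph.Walk.not_nil_of_ne (Ne.symm hw))⟩
  set δ : ℝ := (G.minDegree : ℝ) with hδdef
  set Δ : ℝ := (G.maxDegree : ℝ) with hΔdef
  have hdlo : ∀ v : V, δ ≤ (G.degree v : ℝ) := fun v => by
    rw [hδdef]; exact_mod_cast G.minDegree_le_degree v
  have hdhi : ∀ v : V, (G.degree v : ℝ) ≤ Δ := fun v => by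
    rw [hΔdef]; exact_mod_cast G.degree_le_maxDegree v
  have hdpos : ∀ v : V, (0:ℝ) < (G.degree v : ℝ) := fun v => by exact_mod_cast hdegpos v
  have hδpos : 0 < δ := by
    obtain ⟨v, hv⟩ := G.exists_minimal_degree_vertex
    rw [hδdef, hv]; exact hdpos v
  have hδΔ : δ ≤ Δ := (hdlo u₀).trans (hdhi u₀)
  have hΔpos : 0 < Δ := lt_of_lt_of_le hδpos hδΔ
  have hδne : δ ≠ 0 := ne_of_gt hδpos
  have hΔne : Δ ≠ 0 := ne_of_gt hΔpos
  have hδΔne : δ + Δ ≠ 0 := by positivity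
  -- edge functions
  set fga : Sym2 V → ℝ := Sym2.lift ⟨fun u v =>
      2 * Real.sqrt ((G.degree u : ℝ) * (G.degree v : ℝ)) /
        ((G.degree u : ℝ) + (G.degree v : ℝ)),
      fun a b => by dsimp only; rw [mul_comm ((G.degree a : ℝ)) ((G.degree b : ℝ)),
        add_comm ((G.degree a : ℝ)) ((G.degree b : ℝ))]⟩ with hfga
  set fa : Sym2 V → ℝ := Sym2.lift ⟨fun u v =>
      Real.sqrt ((G.degree u : ℝ) + (G.degree v : ℝ)),
      fun a b => by dsimp only; rw [add_comm ((G.degree a : ℝ)) ((G.degree b : ℝ))]⟩ with hfa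
  set fb : Sym2 V → ℝ := Sym2.lift ⟨fun u v =>
      2 * Real.sqrt ((G.degree u : ℝ) * (G.degree v : ℝ)) /
        (((G.degree u : ℝ) + (G.degree v : ℝ)) *
          Real.sqrt ((G.degree u : ℝ) + (G.degree v : ℝ))),
      fun a b => by dsimp only; rw [mul_comm ((G.degree a : ℝ)) ((G.degree b : ℝ)),
        add_comm ((G.degree a : ℝ)) ((G.degree b : ℝ))]⟩ with hfb
  set fr : Sym2 V → ℝ := Sym2.lift ⟨fun u v =>
      1 / ((G.degree u : ℝ) * (G.degree v : ℝ)),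
      fun a b => by dsimp only; rw [mul_comm ((G.degree a : ℝ)) ((G.degree b : ℝ))]⟩ with hfr
  have hfga_mk : ∀ a b : V, fga s(a,b) = 2 * Real.sqrt ((G.degree a : ℝ) * (G.degree b : ℝ)) /
      ((G.degree a : ℝ) + (G.degree b : ℝ)) := fun a b => by rw [hfga, Sym2.lift_mk]
  have hfa_mk : ∀ a b : V, fa s(a,b)
      = Real.sqrt ((G.degree a : ℝ) + (G.degree b : ℝ)) := fun a b => by rw [hfa, Sym2.lift_mk]
  have hfb_mk : ∀ a b : V, fb s(a,b) = 2 * Real.sqrt ((G.degree a : ℝ) * (G.degree b : ℝ)) /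
      (((G.degree a : ℝ) + (G.degree b : ℝ)) *
        Real.sqrt ((G.degree a : ℝ) + (G.degree b : ℝ))) := fun a b => by rw [hfb, Sym2.lift_mk]
  have hfr_mk : ∀ a b : V, fr s(a,b)
      = 1 / ((G.degree a : ℝ) * (G.degree b : ℝ)) := fun a b => by rw [hfr, Sym2.lift_mk]
  have hGA_def : GA1 G = ∑ e ∈ G.edgeFinset, fga e := by rw [hfga]; rfl
  have hR_def : modZagreb G = ∑ e ∈ G.edgeFinset, fr e := by rw [hfr]; rfl
  have hmem : ∀ a b : V, s(a,b) ∈ G.edgeFinset → G.Adj a b := fun a b h => by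
    rwa [SimpleGraph.mem_edgeFinset, SimpleGraph.mem_edgeSet] at h
  set S : ℝ := ∑ e ∈ G.edgeFinset, (fb e)^2 with hS
  have hApos : 0 < M1 G := by
    have h1 : (0:ℝ) < (G.degree u₀ : ℝ)^2 := pow_pos (hdpos u₀) 2
    exact Finset.sum_pos' (fun v _ => by positivity) ⟨u₀, Finset.mem_univ u₀, h1⟩
  have hRpos : 0 < modZagreb G := by
    rw [hR_def]
    refine Finset.sum_pos (fun e he => ?_) ⟨e₀, he₀⟩
    revert he
    induction e using Sym2.ind with
    | _ a b =>
      intro he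
      rw [hfr_mk]
      exact one_div_pos.2 (mul_pos (hdpos a) (hdpos b))
  have hTδ0 : (0:ℝ) ≤ 2 * δ * M1 G * modZagreb G :=
    le_of_lt (mul_pos (mul_pos (mul_pos two_pos hδpos) hApos) hRpos)
  have hTΔ0 : (0:ℝ) ≤ 2 * Δ * M1 G * modZagreb G :=
    le_of_lt (mul_pos (mul_pos (mul_pos two_pos hΔpos) hApos) hRpos)
  set T : ℝ := Real.sqrt (2 * δ * M1 G * modZagreb G) with hTdef
  by_cases hreg : GraphRegular G
  · -- regular case
    obtain ⟨k, hk⟩ := hreg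
    have hk0 : 0 < k := by have := hdegpos u₀; rwa [hk u₀] at this
    have hkR : (0:ℝ) < (k:ℝ) := by exact_mod_cast hk0
    have hδk : δ = (k:ℝ) := by
      rw [hδdef]
      obtain ⟨v, hv⟩ := G.exists_minimal_degree_vertex
      rw [hv, hk v]
    have hΔk : Δ = (k:ℝ) := by
      rw [hΔdef]
      obtain ⟨v, hv⟩ := G.exists_maximal_degree_vertex
      rw [hv, hk v]
    set m : ℝ := (G.edgeFinset.card : ℝ) with hmdef
    have hGAm : GA1 G = m := by
      rw [hGA_def]
      have h1 : ∀ e ∈ G.edgeFinset, fga e = 1 := by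
        intro e he
        revert he
        induction e using Sym2.ind with
        | _ a b =>
          intro _
          rw [hfga_mk, hk a, hk b, Real.sqrt_mul_self hkR.le,
            show ((k:ℝ) + (k:ℝ)) = 2*(k:ℝ) by ring, div_self (by positivity)]
      rw [Finset.sum_congr rfl h1, Finset.sum_const, nsmul_eq_mul, mul_one, hmdef]
    have hRm : modZagreb G = m * (1/(k:ℝ)^2) := by
      rw [hR_def]
      have h1 : ∀ e ∈ G.edgeFinset, fr e = 1/(k:ℝ)^2 := by
        intro e he
        revert he
        induction e using Sym2.ind with
        | _ a b =>
          intro _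
          rw [hfr_mk, hk a, hk b, sq]
      rw [Finset.sum_congr rfl h1, Finset.sum_const, nsmul_eq_mul, hmdef]
    have hAm : M1 G = (Fintype.card V : ℝ) * (k:ℝ)^2 := by
      show (∑ u : V, (G.degree u : ℝ)^2) = _
      rw [Finset.sum_congr rfl (fun v _ => by rw [hk v]), Finset.sum_const, nsmul_eq_mul,
        Finset.card_univ]
    have hhs : (Fintype.card V : ℝ) * (k:ℝ) = 2*m := by
      have h := G.sum_degrees_eq_twice_card_edges
      have h2 : ∑ v : V, G.degree v = Fintype.card V * k := by
        rw [Finset.sum_congr rfl (fun v _ => hk v), Finset.sum_const, smul_eq_mul,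
          Finset.card_univ]
      rw [h2] at h
      rw [hmdef]
      exact_mod_cast h
    have hTm : 2 * δ * M1 G * modZagreb G = (2*m)^2 := by
      have h3 : 2*(k:ℝ)*((Fintype.card V : ℝ)*(k:ℝ)^2)*(m*(1/(k:ℝ)^2))
          = 2*(k:ℝ)*(Fintype.card V : ℝ)*m := by
        field_simp
      rw [hδk, hAm, hRm, h3]
      linear_combination (2*m) * hhs
    have hTΔm : 2 * Δ * M1 G * modZagreb G = (2*m)^2 := by
      have h3 : 2*(k:ℝ)*((Fintype.card V : ℝ)*(k:ℝ)^2)*(m*(1/(k:ℝ)^2))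
          = 2*(k:ℝ)*(Fintype.card V : ℝ)*m := by
        field_simp
      rw [hΔk, hAm, hRm, h3]
      linear_combination (2*m) * hhs
    have hm0 : (0:ℝ) ≤ m := by rw [hmdef]; positivity
    have hsqrtT : T = 2*m := by rw [hTdef, hTm, Real.sqrt_sq (by linarith)]
    have hsqrtTU : Real.sqrt (2 * Δ * M1 G * modZagreb G) = 2*m := by
      rw [hTΔm, Real.sqrt_sq (by linarith)]
    have hLBm : 4 * Δ ^ 2 * δ ^ 2 * T / ((Δ ^ 2 + δ ^ 2) * (δ + Δ) ^ 2) = m := by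
      rw [hsqrtT, hδk, hΔk, div_eq_iff (by positivity)]
      ring
    have hUBm : Real.sqrt (2 * Δ * M1 G * modZagreb G) / 2 = m := by
      rw [hsqrtTU]; ring
    refine ⟨by rw [hGAm, hLBm], by rw [hGAm, hUBm], ⟨fun _ => ⟨k, hk⟩, fun _ => ?_⟩,
      ⟨fun _ => ⟨k, hk⟩, fun _ => ?_⟩⟩
    · rw [hGAm, hLBm]
    · rw [hGAm, hUBm]
  · -- non-regular case
    have hCS : (GA1 G)^2 ≤ M1 G * S := by
      have hprod : ∑ e ∈ G.edgeFinset, fa e * fb e = GA1 G := by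
        rw [hGA_def]
        refine Finset.sum_congr rfl fun e he => ?_
        revert he
        induction e using Sym2.ind with
        | _ a b =>
          intro he
          rw [hfa_mk, hfb_mk, hfga_mk]
          exact (aux_mul_fafb _ _ (hdpos a) (hdpos b)).symm
      have hA_eq : ∑ e ∈ G.edgeFinset, (fa e)^2 = M1 G := by
        have h1 : ∀ e ∈ G.edgeFinset, (fa e)^2 = Sym2.lift
            ⟨fun u v => (G.degree u : ℝ) + (G.degree v : ℝ), fun _ _ => add_comm _ _⟩ e := by
          intro e _
          induction e using Sym2.ind with
          | _ a b => rw [hfa_mk, Sym2.lift_mk, Real.sq_sqrt (by positivity)]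
        rw [Finset.sum_congr rfl h1, aux_sum_edges_add]
      have h := Finset.sum_mul_sq_le_sq_mul_sq G.edgeFinset fa fb
      rwa [hprod, hA_eq, ← hS] at h
    have hDM : S + (δ/(2*Δ^2))*(1/(2*δ))*(M1 G) ≤ ((δ/(2*Δ^2)) + 1/(2*δ)) * GA1 G := by
      have hA_eq : ∑ e ∈ G.edgeFinset, (fa e)^2 = M1 G := by
        have h1 : ∀ e ∈ G.edgeFinset, (fa e)^2 = Sym2.lift
            ⟨fun u v => (G.degree u : ℝ) + (G.degree v : ℝ), fun _ _ => add_comm _ _⟩ e := by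
          intro e _
          induction e using Sym2.ind with
          | _ a b => rw [hfa_mk, Sym2.lift_mk, Real.sq_sqrt (by positivity)]
        rw [Finset.sum_congr rfl h1, aux_sum_edges_add]
      have hprod : ∑ e ∈ G.edgeFinset, fa e * fb e = GA1 G := by
        rw [hGA_def]
        refine Finset.sum_congr rfl fun e he => ?_
        revert he
        induction e using Sym2.ind with
        | _ a b =>
          intro he
          rw [hfa_mk, hfb_mk, hfga_mk]
          exact (aux_mul_fafb _ _ (hdpos a) (hdpos b)).symm
      have h0 : 0 ≤ ∑ e ∈ G.edgeFinset,
          ((1/(2*δ)*fa e - fb e) * (fb e - (δ/(2*Δ^2))*fa e)) := by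
        refine Finset.sum_nonneg fun e he => ?_
        revert he
        induction e using Sym2.ind with
        | _ a b =>
          intro he
          rw [hfa_mk, hfb_mk]
          exact mul_nonneg (sub_nonneg.2 (aux_fb_le δ _ _ hδpos (hdlo a) (hdlo b)))
            (sub_nonneg.2 (aux_fb_ge δ Δ _ _ hδpos (hdlo a) (hdhi a) (hdlo b) (hdhi b)))
      have hexp : ∑ e ∈ G.edgeFinset, ((1/(2*δ)*fa e - fb e) * (fb e - (δ/(2*Δ^2))*fa e))
          = ((δ/(2*Δ^2)) + 1/(2*δ))*(∑ e ∈ G.edgeFinset, fa e * fb e)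
            - (∑ e ∈ G.edgeFinset, (fb e)^2)
            - (δ/(2*Δ^2))*(1/(2*δ))*(∑ e ∈ G.edgeFinset, (fa e)^2) := by
        rw [Finset.mul_sum, Finset.mul_sum, ← Finset.sum_sub_distrib, ← Finset.sum_sub_distrib]
        exact Finset.sum_congr rfl fun e _ => by ring
      rw [hexp, hprod, hA_eq, ← hS] at h0
      linarith
    -- strictness from non-regularity
    have hmm : G.minDegree ≠ G.maxDegree := by
      intro h
      exact hreg ⟨G.minDegree, fun v =>
        le_antisymm (h ▸ G.degree_le_maxDegree v) (G.minDegree_le_degree v)⟩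
    have hδΔlt : δ < Δ := by
      refine lt_of_le_of_ne hδΔ ?_
      rw [hδdef, hΔdef]
      exact fun hh => hmm (Nat.cast_injective hh)
    have hSgt : 8*δ^3*Δ^2/(δ+Δ)^4 * modZagreb G < S := by
      rw [hS, hR_def, Finset.mul_sum]
      refine Finset.sum_lt_sum_of_nonempty ⟨e₀, he₀⟩ fun e he => ?_
      revert he
      induction e using Sym2.ind with
      | _ a b =>
        intro he
        rw [hfb_mk, hfr_mk, aux_sq_fb _ _ (hdpos a) (hdpos b)]
        exact aux_ratio_lower' δ Δ _ _ hδpos hδΔlt (hdlo a) (hdhi a) (hdlo b) (hdhi b)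
    obtain ⟨v₁, hv₁⟩ := G.exists_minimal_degree_vertex
    obtain ⟨w₁, hw₁⟩ := (G.degree_pos_iff_exists_adj v₁).mp (hdegpos v₁)
    have hmem₁ : s(v₁, w₁) ∈ G.edgeFinset := by
      rw [SimpleGraph.mem_edgeFinset, SimpleGraph.mem_edgeSet]; exact hw₁
    have hx₁ : (G.degree v₁ : ℝ) < Δ := by
      rw [hΔdef]
      have : G.degree v₁ < G.maxDegree := by
        rw [← hv₁]
        exact lt_of_le_of_ne ((G.minDegree_le_degree v₁).trans (G.degree_le_maxDegree v₁)) hmm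
      exact_mod_cast this
    have hSlt : S < Δ/2 * modZagreb G := by
      rw [hS, hR_def, Finset.mul_sum]
      refine Finset.sum_lt_sum (fun e he => ?_) ⟨s(v₁,w₁), hmem₁, ?_⟩
      · revert he
        induction e using Sym2.ind with
        | _ a b =>
          intro he
          rw [hfb_mk, hfr_mk, aux_sq_fb _ _ (hdpos a) (hdpos b)]
          exact aux_ratio_upper Δ _ _ (hdpos a) (hdpos b) (hdhi a) (hdhi b)
      · rw [hfb_mk, hfr_mk, aux_sq_fb _ _ (hdpos v₁) (hdpos w₁)]
        exact aux_ratio_upper' Δ _ _ (hdpos v₁) (hdpos w₁) hx₁ (hdhi w₁)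
    have hg0 : 0 ≤ GA1 G := by
      rw [hGA_def]
      refine Finset.sum_nonneg fun e _ => ?_
      induction e using Sym2.ind with
      | _ a b =>
        rw [hfga_mk]
        positivity
    -- strict upper bound
    have hub' : GA1 G < Real.sqrt (2 * Δ * M1 G * modZagreb G) / 2 := by
      have h1 : (GA1 G)^2 < 2 * Δ * M1 G * modZagreb G/4 := by
        have h2 : M1 G * S < M1 G * (Δ/2*modZagreb G) := by
          exact mul_lt_mul_of_pos_left hSlt hApos
        calc (GA1 G)^2 ≤ M1 G * S := hCS
          _ < M1 G * (Δ/2*modZagreb G) := h2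
          _ = 2 * Δ * M1 G * modZagreb G/4 := by ring
      calc GA1 G = Real.sqrt ((GA1 G)^2) := (Real.sqrt_sq hg0).symm
        _ < Real.sqrt (2 * Δ * M1 G * modZagreb G/4) := Real.sqrt_lt_sqrt (sq_nonneg _) h1
        _ = Real.sqrt ((Real.sqrt (2 * Δ * M1 G * modZagreb G)/2)^2) := by
            rw [div_pow, Real.sq_sqrt hTΔ0]
            norm_num
        _ = Real.sqrt (2 * Δ * M1 G * modZagreb G)/2 := Real.sqrt_sq (by positivity)
    -- strict lower bound
    have key1 := aux_amgm ((δ/(2*Δ^2))*(1/(2*δ))*M1 G) ((8*δ^3*Δ^2/(δ+Δ)^4)*modZagreb G)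
      (le_of_lt (mul_pos (mul_pos (by positivity) (by positivity)) hApos))
      (le_of_lt (mul_pos (by positivity) hRpos))
    have key2 : Real.sqrt (((δ/(2*Δ^2))*(1/(2*δ))*M1 G)*((8*δ^3*Δ^2/(δ+Δ)^4)*modZagreb G))
        = (δ/(δ+Δ)^2) * T := by
      have e1 : ((δ/(2*Δ^2))*(1/(2*δ))*M1 G)*((8*δ^3*Δ^2/(δ+Δ)^4)*modZagreb G)
          = (δ/(δ+Δ)^2)^2 * (2 * δ * M1 G * modZagreb G) := by
        field_simp
        ring
      rw [e1, Real.sqrt_mul (by positivity), Real.sqrt_sq (by positivity), hTdef]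
    have key3 : (8*δ^3*Δ^2/(δ+Δ)^4)*modZagreb G + (δ/(2*Δ^2))*(1/(2*δ))*M1 G
        < ((δ/(2*Δ^2)) + 1/(2*δ)) * GA1 G := by linarith
    have hfin : 2*((δ/(δ+Δ)^2) * T) < ((δ/(2*Δ^2)) + 1/(2*δ)) * GA1 G := by
      rw [← key2]
      linarith
    have hlb' : 4 * Δ ^ 2 * δ ^ 2 * T / ((Δ ^ 2 + δ ^ 2) * (δ + Δ) ^ 2) < GA1 G := by
      rw [div_lt_iff₀ (by positivity)]
      have hfin2 := mul_lt_mul_of_pos_left hfin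
        (by positivity : (0:ℝ) < 2*δ*Δ^2*(δ+Δ)^2)
      have e_l : (2*δ*Δ^2*(δ+Δ)^2)*(2*((δ/(δ+Δ)^2)*T)) = 4*Δ^2*δ^2*T := by
        field_simp
        ring
      have e_r : (2*δ*Δ^2*(δ+Δ)^2)*((((δ/(2*Δ^2)) + 1/(2*δ))) * GA1 G)
          = GA1 G*((Δ^2+δ^2)*(δ+Δ)^2) := by
        field_simp
        ring
      linarith
    exact ⟨hlb'.le, hub'.le,
      ⟨fun h => absurd h (ne_of_gt hlb'), fun hr => absurd hr hreg⟩,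
      ⟨fun h => absurd h (ne_of_lt hub'), fun hr => absurd hr hreg⟩⟩
end
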